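/- arXiv:1411.1909 — 8 statements merged into one kernel-verified Lean document; each statement's English description precedes it below -/
import Mathlib

section
/- Let f be a smooth normalized family on an interval I with ∂_ζf(ζ,t) ≠ 0 for |ζ| = 1, let q : I → ℝ with q(t) ≥ 0, and let P(·,t) be the associated Poisson extension of q(t)/|∂_ζf|²; assume P extends analytically in ζ to a neighborhood of the closed unit disk for each t and is jointly continuous in (ζ,t). If f solves the Löwner–Kufarev equation ∂_tf(ζ,t) = ζ·∂_ζf(ζ,t)·P(ζ,t) on 𝔻 × I, then {f(·,t)} is a subordination chain: for all s, t ∈ I with s ≤ t there exists an injective analytic map φ : 𝔻 → 𝔻 such that f(ζ,s) = f(φ(ζ),t) for all ζ ∈ 𝔻. -/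
open Complex Metric Set
open intervalIntegral MeasureTheory Filter Topology
open scoped Interval

noncomputable section

set_option maxHeartbeats 2000000

/-- Minimum principle for the real part via maximum modulus of `exp (-g)`. -/
lemma rePos_of_rePos_sphere {g : ℂ → ℂ} {V : Set ℂ} (hV : IsOpen V)
    (hVD : closedBall (0 : ℂ) 1 ⊆ V) (hg : DifferentiableOn ℂ g V)
    (hsphere : ∀ z : ℂ, ‖z‖ = 1 → 0 ≤ (g z).re) :
    ∀ z ∈ closedBall (0 : ℂ) 1, 0 ≤ (g z).re := by
  intro z hz
  have hsub : closure (ball (0 : ℂ) 1) ⊆ V := by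
    rwa [closure_ball (0 : ℂ) one_ne_zero]
  have hd : DiffContOnCl ℂ (fun w => Complex.exp (-g w)) (ball 0 1) :=
    DifferentiableOn.diffContOnCl (by
      exact ((hg.mono hsub).neg.cexp))
  have hb : ∀ w ∈ frontier (ball (0 : ℂ) 1), ‖Complex.exp (-g w)‖ ≤ 1 := by
    intro w hw
    rw [frontier_ball (0 : ℂ) one_ne_zero] at hw
    have hw1 : ‖w‖ = 1 := by
      simpa [Complex.dist_eq] using (mem_sphere_iff_norm.mp hw)
    rw [Complex.norm_exp]
    have hle : (-g w).re ≤ 0 := by simpa using hsphere w hw1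
    exact Real.exp_le_one_iff.mpr hle
  have hzc : z ∈ closure (ball (0 : ℂ) 1) := by
    rwa [closure_ball (0 : ℂ) one_ne_zero]
  have := Complex.norm_le_of_forall_mem_frontier_norm_le isBounded_ball hd hb hzc
  rw [Complex.norm_exp] at this
  have h2 : (-g z).re ≤ 0 := Real.exp_le_one_iff.mp this
  simpa using h2

/-- A Cauchy-type Lipschitz estimate on a smaller ball. -/
lemma lip_of_bounded {g : ℂ → ℂ} {R1 R2 M : ℝ} (hR1 : 0 ≤ R1) (hR : R1 < R2)
    (hg : DifferentiableOn ℂ g (ball 0 R2))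
    (hM : ∀ z ∈ ball (0 : ℂ) R2, ‖g z‖ ≤ M) :
    ∀ x ∈ closedBall (0 : ℂ) R1, ∀ y ∈ closedBall (0 : ℂ) R1,
      ‖g x - g y‖ ≤ (2 * M + 1) / (R2 - R1) * ‖x - y‖ := by
  have hM0 : 0 ≤ M := by
    have h0 : (0 : ℂ) ∈ ball (0 : ℂ) R2 := by
      simp [hR1.trans_lt hR]
    exact (norm_nonneg _).trans (hM 0 h0)
  have hderiv : ∀ x ∈ closedBall (0 : ℂ) R1, ‖deriv g x‖ ≤ (2 * M + 1) / (R2 - R1) := by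
    intro x hx
    have hxball : ball x (R2 - R1) ⊆ ball 0 R2 := by
      intro w hw
      have : dist w (0 : ℂ) ≤ dist w x + dist x 0 := dist_triangle _ _ _
      have hx' : dist x (0:ℂ) ≤ R1 := mem_closedBall.mp hx
      have hw' : dist w x < R2 - R1 := mem_ball.mp hw
      exact mem_ball.mpr (by linarith)
    refine Complex.norm_deriv_le_div_of_mapsTo_ball (hg.mono hxball) ?_ (by linarith)
    intro w hw
    have h1 : ‖g w - g x‖ ≤ ‖g w‖ + ‖g x‖ := norm_sub_le _ _
    have h2 : ‖g w‖ ≤ M := hM _ (hxball hw)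
    have h3 : ‖g x‖ ≤ M := hM _ (hxball (mem_ball_self (by linarith)))
    have : dist (g w) (g x) < 2 * M + 1 := by
      rw [dist_eq_norm]; linarith
    exact mem_closedBall.mpr this.le
  intro x hx y hy
  refine (convex_closedBall (0:ℂ) R1).norm_image_sub_le_of_norm_deriv_le
    (fun w hw => hg.differentiableAt (isOpen_ball.mem_nhds ?_)) hderiv hy hx
  exact lt_of_le_of_lt (mem_closedBall.mp hw) hR

/-- Picard iterates in exponential form. -/
def picardIt (P : ℂ → ℝ → ℂ) (a : ℝ) : ℕ → ℂ → ℝ → ℂ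
  | 0 => fun ζ _ => ζ
  | n + 1 => fun ζ τ => ζ * Complex.exp (-∫ σ in a..τ, P (picardIt P a n ζ σ) σ)

lemma primitive_hasDerivAt {g : ℝ → ℂ} (hg : Continuous g) (a τ : ℝ) :
    HasDerivAt (fun τ' => ∫ σ in a..τ', g σ) (g τ) τ :=
  intervalIntegral.integral_hasDerivAt_right (hg.intervalIntegrable _ _)
    (hg.stronglyMeasurableAtFilter _ _) hg.continuousAt

lemma exp_sub_exp_norm_le {A B : ℂ} (hA : 0 ≤ A.re) (hB : 0 ≤ B.re) :
    ‖Complex.exp (-A) - Complex.exp (-B)‖ ≤ ‖A - B‖ := by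
  set g : ℝ → ℂ := fun θ => Complex.exp (-(B + (θ : ℂ) * (A - B))) with hg
  have hderiv : ∀ θ : ℝ, HasDerivAt g (g θ * (B - A)) θ := by
    intro θ
    have h1 : HasDerivAt (fun θ' : ℝ => ((θ' : ℂ))) 1 θ := by
      simpa using (hasDerivAt_id θ).ofReal_comp
    have h2 : HasDerivAt (fun θ' : ℝ => -(B + (θ' : ℂ) * (A - B))) (B - A) θ := by
      have h := ((h1.mul_const (A - B)).const_add B).neg
      rw [show B - A = -(1 * (A - B)) by ring]
      exact h
    exact h2.cexp
  have hre : ∀ θ : ℝ, 0 ≤ θ → θ ≤ 1 → 0 ≤ (B + (θ : ℂ) * (A - B)).re := by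
    intro θ h0 h1
    have hrew : (B + (θ : ℂ) * (A - B)).re = (1 - θ) * B.re + θ * A.re := by
      simp [Complex.add_re, Complex.mul_re, Complex.ofReal_re, Complex.ofReal_im,
        Complex.sub_re, Complex.sub_im]
      ring
    rw [hrew]
    have h1' : 0 ≤ 1 - θ := by linarith
    exact add_nonneg (mul_nonneg h1' hB) (mul_nonneg h0 hA)
  have hbound : ∀ θ ∈ Ico (0 : ℝ) 1, ‖g θ * (B - A)‖ ≤ ‖A - B‖ := by
    intro θ hθ
    rw [norm_mul]
    have hexp : ‖g θ‖ ≤ 1 := by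
      rw [hg]
      rw [Complex.norm_exp]
      refine Real.exp_le_one_iff.mpr ?_
      have hnr : (-(B + (θ : ℂ) * (A - B))).re = -((B + (θ : ℂ) * (A - B)).re) :=
        Complex.neg_re _
      rw [hnr]
      have := hre θ hθ.1 hθ.2.le
      linarith
    have hAB : ‖B - A‖ = ‖A - B‖ := norm_sub_rev _ _
    calc ‖g θ‖ * ‖B - A‖ ≤ 1 * ‖B - A‖ := by gcongr
      _ = ‖A - B‖ := by rw [one_mul, hAB]
  have key := norm_image_sub_le_of_norm_deriv_le_segment'
    (f := g) (f' := fun θ => g θ * (B - A)) (a := 0) (b := 1) (C := ‖A - B‖)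
    (fun θ _ => (hderiv θ).hasDerivWithinAt) hbound 1 (right_mem_Icc.mpr zero_le_one)
  have hg1 : g 1 = Complex.exp (-A) := by
    show Complex.exp _ = _
    congr 1
    push_cast
    ring
  have hg0 : g 0 = Complex.exp (-B) := by
    show Complex.exp _ = _
    congr 1
    push_cast
    ring
  rw [hg1, hg0] at key
  simpa using key

/-- Continuous total extension of `σ ↦ P (w σ) σ` off `Icc a b`. -/
lemma ext_cont {P : ℂ → ℝ → ℂ} {V : Set ℂ} {I : Set ℝ}
    (hPjoint : ContinuousOn (fun p : ℂ × ℝ => P p.1 p.2) (V ×ˢ I))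
    (hVD : closedBall (0 : ℂ) 1 ⊆ V)
    {a b : ℝ} (hab : a ≤ b) (hIcc : Icc a b ⊆ I)
    {w : ℝ → ℂ} (hw : ContinuousOn w (Icc a b)) (hwb : ∀ σ ∈ Icc a b, ‖w σ‖ ≤ 1) :
    ∃ g : ℝ → ℂ, Continuous g ∧ ∀ σ ∈ Icc a b, g σ = P (w σ) σ := by
  set e : ℝ → ℝ := fun σ => (Set.projIcc a b hab σ : ℝ) with he
  have he_cont : Continuous e := continuous_subtype_val.comp (continuous_projIcc)
  have he_mem : ∀ σ, e σ ∈ Icc a b := fun σ => (Set.projIcc a b hab σ).2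
  refine ⟨fun σ => P (w (e σ)) (e σ), ?_, ?_⟩
  · have hwe : Continuous fun σ => w (e σ) :=
      hw.comp_continuous he_cont he_mem
    have hpair : Continuous fun σ => ((w (e σ), e σ) : ℂ × ℝ) := hwe.prodMk he_cont
    refine hPjoint.comp_continuous hpair ?_
    intro σ
    exact ⟨hVD (by simpa [Metric.mem_closedBall, dist_eq_norm] using hwb _ (he_mem σ)),
      hIcc (he_mem σ)⟩
  · intro σ hσ
    simp [he, Set.projIcc_of_mem hab hσ]

lemma param_integral_diff {P : ℂ → ℝ → ℂ} {V : Set ℂ} {I : Set ℝ}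
    (hV : IsOpen V) (hVD : closedBall (0 : ℂ) 1 ⊆ V)
    (hPanal : ∀ t ∈ I, DifferentiableOn ℂ (fun ζ => P ζ t) V)
    (hPjoint : ContinuousOn (fun p : ℂ × ℝ => P p.1 p.2) (V ×ˢ I))
    {a b : ℝ} (hab : a ≤ b) (hIcc : Icc a b ⊆ I)
    {r K : ℝ} (h0r : 0 ≤ r) (hr1 : r < 1) (hK0 : 0 ≤ K)
    (hLipP : ∀ σ ∈ Icc a b, ∀ x ∈ closedBall (0:ℂ) r, ∀ y ∈ closedBall (0:ℂ) r,
      ‖P x σ - P y σ‖ ≤ K * ‖x - y‖)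
    {u : ℂ → ℝ → ℂ}
    (hu_cont : ∀ ζ ∈ closedBall (0:ℂ) r, ContinuousOn (u ζ) (Icc a b))
    (hu_bdd : ∀ ζ ∈ closedBall (0:ℂ) r, ∀ σ ∈ Icc a b, ‖u ζ σ‖ ≤ r)
    (hu_diff : ∀ σ ∈ Icc a b, DifferentiableOn ℂ (fun z => u z σ) (ball 0 r))
    {τ : ℝ} (hτ : τ ∈ Icc a b) :
    DifferentiableOn ℂ (fun ζ => ∫ σ in a..τ, P (u ζ σ) σ) (ball (0:ℂ) r) := by
  have hVr : closedBall (0:ℂ) r ⊆ V := fun z hz =>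
    hVD (closedBall_subset_closedBall hr1.le hz)
  have hIoc : Ι a τ ⊆ Icc a b := by
    rw [uIoc_of_le hτ.1]
    exact fun σ hσ => ⟨hσ.1.le, hσ.2.trans hτ.2⟩
  -- continuity in σ of the integrand, for each fixed x in the closed ball
  have hFcont : ∀ x ∈ closedBall (0:ℂ) r, ContinuousOn (fun σ => P (u x σ) σ) (Icc a b) := by
    intro x hx
    have hpair : ContinuousOn (fun σ => ((u x σ, σ) : ℂ × ℝ)) (Icc a b) :=
      (hu_cont x hx).prodMk continuousOn_id
    refine hPjoint.comp hpair ?_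
    intro σ hσ
    exact ⟨hVr (mem_closedBall_zero_iff.mpr (hu_bdd x hx σ hσ)), hIcc hσ⟩
  have hmeasF : ∀ x ∈ closedBall (0:ℂ) r,
      AEStronglyMeasurable (fun σ => P (u x σ) σ) (volume.restrict (Ι a τ)) := fun x hx =>
    ((hFcont x hx).mono hIoc).aestronglyMeasurable measurableSet_uIoc
  intro x₀ hx₀
  have hx₀' : ‖x₀‖ < r := mem_ball_zero_iff.mp hx₀
  set ε : ℝ := (r - ‖x₀‖) / 2 with hε_def
  have hε : 0 < ε := by rw [hε_def]; linarith
  have hball : ball x₀ ε ⊆ ball (0:ℂ) r := by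
    intro x hx
    have := mem_ball.mp hx
    rw [mem_ball_zero_iff]
    calc ‖x‖ = ‖x₀ + (x - x₀)‖ := by ring_nf
      _ ≤ ‖x₀‖ + ‖x - x₀‖ := norm_add_le _ _
      _ < ‖x₀‖ + ε := by
          have : ‖x - x₀‖ < ε := by rwa [← dist_eq_norm]
          linarith
      _ ≤ r := by rw [hε_def]; linarith
  have hballc : ball x₀ ε ⊆ closedBall (0:ℂ) r := hball.trans ball_subset_closedBall
  -- uniform derivative bound for u (·, σ) on ball x₀ ε
  have hu_deriv_bd : ∀ σ ∈ Icc a b, ∀ x ∈ ball x₀ ε,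
      ‖deriv (fun z => u z σ) x‖ ≤ (2 * r + 1) / ε := by
    intro σ hσ x hx
    have hx' : ball x ε ⊆ ball (0:ℂ) r := by
      intro w hw
      rw [mem_ball_zero_iff]
      have h1 : ‖w - x‖ < ε := by rwa [← dist_eq_norm, ← mem_ball]
      have h2 : ‖x - x₀‖ < ε := by rwa [← dist_eq_norm, ← mem_ball]
      calc ‖w‖ = ‖x₀ + (x - x₀) + (w - x)‖ := by ring_nf
        _ ≤ ‖x₀ + (x - x₀)‖ + ‖w - x‖ := norm_add_le _ _
        _ ≤ ‖x₀‖ + ‖x - x₀‖ + ‖w - x‖ := by gcongr; exact norm_add_le _ _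
        _ < ‖x₀‖ + ε + ε := by linarith
        _ ≤ r := by rw [hε_def]; linarith
    refine Complex.norm_deriv_le_div_of_mapsTo_ball ((hu_diff σ hσ).mono hx') ?_ hε
    intro w hw
    have hwr : ‖u w σ‖ ≤ r := hu_bdd w (ball_subset_closedBall (hx' hw)) σ hσ
    have hxr : ‖u x σ‖ ≤ r :=
      hu_bdd x (ball_subset_closedBall (hx' (mem_ball_self hε))) σ hσ
    rw [mem_closedBall, dist_eq_norm]
    refine le_of_lt ?_
    calc ‖u w σ - u x σ‖ ≤ ‖u w σ‖ + ‖u x σ‖ := norm_sub_le _ _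
      _ ≤ 2 * r := by linarith
      _ < 2 * r + 1 := by linarith
  -- Lipschitz bound for the composite integrand in the parameter
  set C : ℝ := K * ((2 * r + 1) / ε) with hC_def
  have hC0 : 0 ≤ C := by
    have : 0 ≤ (2 * r + 1) / ε := by positivity
    exact mul_nonneg hK0 this
  have hlip : ∀ σ ∈ Icc a b, ∀ x ∈ ball x₀ ε, ∀ y ∈ ball x₀ ε,
      ‖P (u x σ) σ - P (u y σ) σ‖ ≤ C * ‖x - y‖ := by
    intro σ hσ x hx y hy
    have hux : u x σ ∈ closedBall (0:ℂ) r :=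
      mem_closedBall_zero_iff.mpr (hu_bdd x (hballc hx) σ hσ)
    have huy : u y σ ∈ closedBall (0:ℂ) r :=
      mem_closedBall_zero_iff.mpr (hu_bdd y (hballc hy) σ hσ)
    have h1 := hLipP σ hσ _ hux _ huy
    have h2 : ‖u x σ - u y σ‖ ≤ (2 * r + 1) / ε * ‖x - y‖ := by
      refine (convex_ball x₀ ε).norm_image_sub_le_of_norm_deriv_le
        (fun w hw => (hu_diff σ hσ).differentiableAt (isOpen_ball.mem_nhds (hball hw)))
        (fun w hw => hu_deriv_bd σ hσ w hw) hy hx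
    calc ‖P (u x σ) σ - P (u y σ) σ‖ ≤ K * ‖u x σ - u y σ‖ := h1
      _ ≤ K * ((2 * r + 1) / ε * ‖x - y‖) := by gcongr
      _ = C * ‖x - y‖ := by rw [hC_def]; ring
  -- pointwise differentiability of the integrand in the parameter
  have hdiffAt : ∀ x ∈ ball (0:ℂ) r, ∀ σ ∈ Icc a b,
      DifferentiableAt ℂ (fun z => P (u z σ) σ) x := by
    intro x hx σ hσ
    have hu : DifferentiableAt ℂ (fun z => u z σ) x :=
      (hu_diff σ hσ).differentiableAt (isOpen_ball.mem_nhds hx)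
    have hmem : u x σ ∈ V :=
      hVr (mem_closedBall_zero_iff.mpr (hu_bdd x (ball_subset_closedBall hx) σ hσ))
    have hP : DifferentiableAt ℂ (fun z => P z σ) (u x σ) :=
      (hPanal σ (hIcc hσ)).differentiableAt (hV.mem_nhds hmem)
    exact hP.comp x hu
  set F' : ℝ → ℂ := fun σ => deriv (fun x => P (u x σ) σ) x₀ with hF'_def
  -- measurability of F'
  have hF'_meas : AEStronglyMeasurable F' (volume.restrict (Ι a τ)) := by
    set y : ℕ → ℂ := fun k => x₀ + ((ε * (1 / (k + 1)) : ℝ) : ℂ) with hy_def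
    have hy_mem : ∀ k, y k ∈ closedBall (0:ℂ) r := by
      intro k
      have h1 : ε * (1 / ((k:ℝ) + 1)) ≤ ε := by
        have : 1 / ((k:ℝ) + 1) ≤ 1 := by
          rw [div_le_one (by positivity)]; simp
        nlinarith
      have h2 : 0 ≤ ε * (1 / ((k:ℝ) + 1)) := by positivity
      rw [mem_closedBall_zero_iff, hy_def]
      calc ‖x₀ + ((ε * (1 / ((k:ℝ) + 1)) : ℝ) : ℂ)‖ ≤ ‖x₀‖ + ‖((ε * (1 / ((k:ℝ) + 1)) : ℝ) : ℂ)‖ :=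
            norm_add_le _ _
        _ = ‖x₀‖ + |ε * (1 / ((k:ℝ) + 1))| := by rw [Complex.norm_real, Real.norm_eq_abs]
        _ ≤ ‖x₀‖ + ε := by rw [_root_.abs_of_nonneg h2]; linarith
        _ ≤ r := by rw [hε_def]; linarith
    have hy_ne : ∀ k, y k ≠ x₀ := by
      intro k
      simp only [hy_def, ne_eq, add_eq_left]
      rw [Complex.ofReal_eq_zero]
      positivity
    have hy_tend : Tendsto y atTop (𝓝[≠] x₀) := by
      refine tendsto_nhdsWithin_of_tendsto_nhds_of_eventually_within _ ?_
        (Eventually.of_forall fun k => hy_ne k)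
      have h1 : Tendsto (fun k : ℕ => (ε * (1 / ((k:ℝ) + 1)) : ℝ)) atTop (𝓝 0) := by
        have := tendsto_one_div_add_atTop_nhds_zero_nat.const_mul ε
        simpa using this
      have h2 : Tendsto (fun k : ℕ => ((ε * (1 / ((k:ℝ) + 1)) : ℝ) : ℂ)) atTop
          (𝓝 (((0:ℝ) : ℂ))) := by
        exact (Complex.continuous_ofReal.tendsto 0).comp h1
      have h3 : Tendsto (fun k : ℕ => x₀ + ((ε * (1 / ((k:ℝ) + 1)) : ℝ) : ℂ)) atTop
          (𝓝 (x₀ + ((0:ℝ) : ℂ))) := Tendsto.const_add x₀ h2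
      rw [hy_def]
      simpa using h3
    refine aestronglyMeasurable_of_tendsto_ae atTop
      (f := fun k σ => slope (fun x => P (u x σ) σ) x₀ (y k)) ?_ ?_
    · intro k
      show AEStronglyMeasurable (fun σ => slope (fun x => P (u x σ) σ) x₀ (y k))
        (volume.restrict (Ι a τ))
      have heq : (fun σ => slope (fun x => P (u x σ) σ) x₀ (y k)) =
          fun σ => (y k - x₀)⁻¹ * (P (u (y k) σ) σ - P (u x₀ σ) σ) := by
        funext σ; rw [slope_def_field, div_eq_inv_mul]
      rw [heq]
      exact ((hmeasF _ (hy_mem k)).sub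
        (hmeasF _ (ball_subset_closedBall hx₀))).const_mul _
    · refine (ae_restrict_iff' measurableSet_uIoc).mpr (ae_of_all _ ?_)
      intro σ hσ
      have hd := (hdiffAt x₀ hx₀ σ (hIoc hσ)).hasDerivAt
      have := hasDerivAt_iff_tendsto_slope.mp hd
      exact this.comp hy_tend
  -- the dominated differentiation theorem
  have hF_meas : ∀ᶠ x in 𝓝 x₀, AEStronglyMeasurable (fun σ => P (u x σ) σ)
      (volume.restrict (Ι a τ)) := by
    filter_upwards [isOpen_ball.mem_nhds (mem_ball_self hε)] with x hx
    exact hmeasF x (hballc hx)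
  have hF_int : IntervalIntegrable (fun σ => P (u x₀ σ) σ) volume a τ := by
    refine ContinuousOn.intervalIntegrable ?_
    refine (hFcont x₀ (ball_subset_closedBall hx₀)).mono ?_
    rw [uIcc_of_le hτ.1]
    exact Icc_subset_Icc le_rfl hτ.2
  have h_lipsch : ∀ᵐ σ ∂volume, σ ∈ Ι a τ →
      LipschitzOnWith (Real.nnabs C) (fun x => P (u x σ) σ) (ball x₀ ε) := by
    refine ae_of_all _ ?_
    intro σ hσ
    refine LipschitzOnWith.of_dist_le_mul ?_
    intro x hx y hy
    rw [dist_eq_norm, dist_eq_norm]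
    calc ‖P (u x σ) σ - P (u y σ) σ‖ ≤ C * ‖x - y‖ := hlip σ (hIoc hσ) x hx y hy
      _ ≤ (Real.nnabs C : ℝ) * ‖x - y‖ := by
          gcongr
          simp only [Real.coe_nnabs]
          exact le_abs_self C
  have h_diff : ∀ᵐ σ ∂volume, σ ∈ Ι a τ →
      HasDerivAt (fun x => P (u x σ) σ) (F' σ) x₀ :=
    ae_of_all _ fun σ hσ => (hdiffAt x₀ hx₀ σ (hIoc hσ)).hasDerivAt
  have key := intervalIntegral.hasDerivAt_integral_of_dominated_loc_of_lip
    (F := fun x σ => P (u x σ) σ) (F' := F') (x₀ := x₀) (a := a) (b := τ)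
    (bound := fun _ => C) (μ := volume) (ball_mem_nhds x₀ hε) hF_meas hF_int hF'_meas h_lipsch
    intervalIntegrable_const h_diff
  exact key.2.differentiableAt.differentiableWithinAt

lemma step_flow {P : ℂ → ℝ → ℂ} {V : Set ℂ} {I : Set ℝ}
    (hV : IsOpen V) (hVD : closedBall (0 : ℂ) 1 ⊆ V)
    (hPanal : ∀ t ∈ I, DifferentiableOn ℂ (fun ζ => P ζ t) V)
    (hPjoint : ContinuousOn (fun p : ℂ × ℝ => P p.1 p.2) (V ×ˢ I))
    (hRe : ∀ t ∈ I, ∀ z ∈ closedBall (0:ℂ) 1, 0 ≤ (P z t).re)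
    {a b : ℝ} (hab : a ≤ b) (hIcc : Icc a b ⊆ I)
    {r K : ℝ} (h0r : 0 ≤ r) (hr1 : r < 1) (hK0 : 0 ≤ K)
    (hLipP : ∀ σ ∈ Icc a b, ∀ x ∈ closedBall (0:ℂ) r, ∀ y ∈ closedBall (0:ℂ) r,
      ‖P x σ - P y σ‖ ≤ K * ‖x - y‖)
    (hshort : K * (b - a) ≤ 1/2) :
    ∃ Φ : ℂ → ℝ → ℂ,
      (∀ τ ∈ Icc a b, DifferentiableOn ℂ (fun ζ => Φ ζ τ) (ball (0:ℂ) r)) ∧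
      ∀ ζ ∈ closedBall (0:ℂ) r,
        Φ ζ a = ζ ∧ ContinuousOn (Φ ζ) (Icc a b) ∧
        ∀ τ ∈ Icc a b, ‖Φ ζ τ‖ ≤ ‖ζ‖ ∧
          HasDerivWithinAt (Φ ζ) (-(Φ ζ τ) * P (Φ ζ τ) τ) (Icc a b) τ := by
  set u : ℕ → ℂ → ℝ → ℂ := picardIt P a with hu_def
  have hu_succ : ∀ n ζ τ, u (n+1) ζ τ =
      ζ * Complex.exp (-∫ σ in a..τ, P (u n ζ σ) σ) := fun n ζ τ => rfl
  have hu_zero : ∀ ζ τ, u 0 ζ τ = ζ := fun ζ τ => rfl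
  have hcb1 : closedBall (0:ℂ) r ⊆ closedBall (0:ℂ) 1 :=
    closedBall_subset_closedBall hr1.le
  have hFc : ∀ w : ℝ → ℂ, ContinuousOn w (Icc a b) → (∀ σ ∈ Icc a b, ‖w σ‖ ≤ 1) →
      ContinuousOn (fun σ => P (w σ) σ) (Icc a b) := by
    intro w hw hwb
    refine hPjoint.comp (hw.prodMk continuousOn_id) ?_
    intro σ hσ
    exact ⟨hVD (mem_closedBall_zero_iff.mpr (hwb σ hσ)), hIcc hσ⟩
  have hIcc_sub : ∀ {τ : ℝ}, τ ∈ Icc a b → Icc a τ ⊆ Icc a b :=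
    fun hτ => Icc_subset_Icc le_rfl hτ.2
  have hInt : ∀ w : ℝ → ℂ, ContinuousOn w (Icc a b) → (∀ σ ∈ Icc a b, ‖w σ‖ ≤ 1) →
      ∀ τ ∈ Icc a b, IntervalIntegrable (fun σ => P (w σ) σ) volume a τ := by
    intro w hw hwb τ hτ
    refine ContinuousOn.intervalIntegrable ?_
    refine (hFc w hw hwb).mono ?_
    rw [uIcc_of_le hτ.1]
    exact hIcc_sub hτ
  have hReInt : ∀ w : ℝ → ℂ, ContinuousOn w (Icc a b) → (∀ σ ∈ Icc a b, ‖w σ‖ ≤ 1) →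
      ∀ τ ∈ Icc a b, 0 ≤ (∫ σ in a..τ, P (w σ) σ).re := by
    intro w hw hwb τ hτ
    have h1 : (∫ σ in a..τ, P (w σ) σ).re = ∫ σ in a..τ, (P (w σ) σ).re := by
      have := Complex.reCLM.intervalIntegral_comp_comm (hInt w hw hwb τ hτ)
      simpa using this.symm
    rw [h1]
    refine intervalIntegral.integral_nonneg hτ.1 ?_
    intro σ hσ
    exact hRe σ (hIcc (hIcc_sub hτ hσ)) _ (mem_closedBall_zero_iff.mpr (hwb σ (hIcc_sub hτ hσ)))
  -- basic invariants of the iterates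
  have inv : ∀ n : ℕ,
      (∀ ζ ∈ closedBall (0:ℂ) r,
        (∀ τ ∈ Icc a b, ‖u n ζ τ‖ ≤ ‖ζ‖) ∧ ContinuousOn (u n ζ) (Icc a b)) ∧
      (∀ τ ∈ Icc a b, DifferentiableOn ℂ (fun z => u n z τ) (ball (0:ℂ) r)) := by
    intro n
    induction n with
    | zero =>
      exact ⟨fun ζ hζ => ⟨fun τ _ => le_rfl, continuousOn_const⟩,
        fun τ _ => (differentiable_id : Differentiable ℂ (fun z : ℂ => z)).differentiableOn⟩
    | succ n ih =>
      obtain ⟨ih1, ih2⟩ := ih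
      have hwb : ∀ ζ ∈ closedBall (0:ℂ) r, ∀ σ ∈ Icc a b, ‖u n ζ σ‖ ≤ 1 := by
        intro ζ hζ σ hσ
        exact ((ih1 ζ hζ).1 σ hσ).trans ((mem_closedBall_zero_iff.mp hζ).trans hr1.le)
      have hwbr : ∀ ζ ∈ closedBall (0:ℂ) r, ∀ σ ∈ Icc a b, ‖u n ζ σ‖ ≤ r := by
        intro ζ hζ σ hσ
        exact ((ih1 ζ hζ).1 σ hσ).trans (mem_closedBall_zero_iff.mp hζ)
      constructor
      · intro ζ hζ
        constructor
        · intro τ hτ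
          rw [hu_succ, norm_mul]
          have hre := hReInt (u n ζ) (ih1 ζ hζ).2 (hwb ζ hζ) τ hτ
          have hexp : ‖Complex.exp (-∫ σ in a..τ, P (u n ζ σ) σ)‖ ≤ 1 := by
            rw [Complex.norm_exp]
            refine Real.exp_le_one_iff.mpr ?_
            rw [Complex.neg_re]
            linarith
          calc ‖ζ‖ * ‖Complex.exp (-∫ σ in a..τ, P (u n ζ σ) σ)‖ ≤ ‖ζ‖ * 1 := by gcongr
            _ = ‖ζ‖ := mul_one _
        · obtain ⟨g, hgcont, hgeq⟩ := ext_cont hPjoint hVD hab hIcc (ih1 ζ hζ).2 (hwb ζ hζ)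
          have hprim : Continuous fun τ' => ∫ σ in a..τ', g σ := by
            refine continuous_iff_continuousAt.mpr fun τ' => ?_
            exact (primitive_hasDerivAt hgcont a τ').continuousAt
          have hcongr : ∀ τ' ∈ Icc a b,
              ζ * Complex.exp (-∫ σ in a..τ', g σ) = u (n+1) ζ τ' := by
            intro τ' hτ'
            rw [hu_succ]
            have hIeq : ∫ σ in a..τ', g σ = ∫ σ in a..τ', P (u n ζ σ) σ := by
              refine intervalIntegral.integral_congr ?_
              intro σ hσ
              rw [uIcc_of_le hτ'.1] at hσ
              exact hgeq σ (hIcc_sub hτ' hσ)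
            rw [hIeq]
          refine ContinuousOn.congr ?_ (fun τ' hτ' => (hcongr τ' hτ').symm)
          exact (continuous_const.mul (hprim.neg.cexp)).continuousOn
      · intro τ hτ
        have hdi := param_integral_diff hV hVD hPanal hPjoint hab hIcc h0r hr1 hK0 hLipP
          (fun ζ hζ => (ih1 ζ hζ).2) hwbr ih2 hτ
        exact differentiableOn_id.mul (hdi.neg.cexp)
  -- geometric estimate between consecutive iterates
  have hest : ∀ n : ℕ, ∀ ζ ∈ closedBall (0:ℂ) r, ∀ τ ∈ Icc a b,
      ‖u (n+1) ζ τ - u n ζ τ‖ ≤ 2 * (1/2 : ℝ)^n := by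
    intro n
    induction n with
    | zero =>
      intro ζ hζ τ hτ
      have h1 : ‖u 1 ζ τ‖ ≤ ‖ζ‖ := ((inv 1).1 ζ hζ).1 τ hτ
      have h2 : ‖ζ‖ ≤ r := mem_closedBall_zero_iff.mp hζ
      calc ‖u 1 ζ τ - u 0 ζ τ‖ ≤ ‖u 1 ζ τ‖ + ‖u 0 ζ τ‖ := norm_sub_le _ _
        _ ≤ ‖ζ‖ + ‖ζ‖ := by rw [hu_zero]; gcongr
        _ ≤ 2 * (1/2 : ℝ)^0 := by
            rw [pow_zero, mul_one]
            have h3 : ‖ζ‖ ≤ 1 := h2.trans hr1.le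
            linarith
    | succ n ih =>
      intro ζ hζ τ hτ
      have hbd := fun m => ((inv m).1 ζ hζ)
      have hwbm : ∀ m, ∀ σ ∈ Icc a b, ‖u m ζ σ‖ ≤ 1 := fun m σ hσ =>
        ((hbd m).1 σ hσ).trans ((mem_closedBall_zero_iff.mp hζ).trans hr1.le)
      have hwbrm : ∀ m, ∀ σ ∈ Icc a b, u m ζ σ ∈ closedBall (0:ℂ) r := fun m σ hσ =>
        mem_closedBall_zero_iff.mpr (((hbd m).1 σ hσ).trans (mem_closedBall_zero_iff.mp hζ))
      set A : ℂ := ∫ σ in a..τ, P (u (n+1) ζ σ) σ with hA_def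
      set B : ℂ := ∫ σ in a..τ, P (u n ζ σ) σ with hB_def
      have hAre : 0 ≤ A.re := hReInt _ (hbd (n+1)).2 (hwbm (n+1)) τ hτ
      have hBre : 0 ≤ B.re := hReInt _ (hbd n).2 (hwbm n) τ hτ
      have hABsub : A - B = ∫ σ in a..τ, (P (u (n+1) ζ σ) σ - P (u n ζ σ) σ) := by
        rw [hA_def, hB_def,
          intervalIntegral.integral_sub (hInt _ (hbd (n+1)).2 (hwbm (n+1)) τ hτ)
            (hInt _ (hbd n).2 (hwbm n) τ hτ)]
      have hABnorm : ‖A - B‖ ≤ K * (2 * (1/2 : ℝ)^n) * (τ - a) := by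
        rw [hABsub]
        have := intervalIntegral.norm_integral_le_of_norm_le_const
          (C := K * (2 * (1/2 : ℝ)^n)) (a := a) (b := τ)
          (f := fun σ => P (u (n+1) ζ σ) σ - P (u n ζ σ) σ) ?_
        · calc ‖∫ σ in a..τ, (P (u (n+1) ζ σ) σ - P (u n ζ σ) σ)‖
              ≤ K * (2 * (1/2 : ℝ)^n) * |τ - a| := this
            _ = K * (2 * (1/2 : ℝ)^n) * (τ - a) := by
                rw [_root_.abs_of_nonneg (by linarith [hτ.1] : (0:ℝ) ≤ τ - a)]
        · intro σ hσ
          rw [uIoc_of_le hτ.1] at hσ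
          have hσ' : σ ∈ Icc a b := ⟨hσ.1.le, hσ.2.trans hτ.2⟩
          calc ‖P (u (n+1) ζ σ) σ - P (u n ζ σ) σ‖
              ≤ K * ‖u (n+1) ζ σ - u n ζ σ‖ :=
                hLipP σ hσ' _ (hwbrm (n+1) σ hσ') _ (hwbrm n σ hσ')
            _ ≤ K * (2 * (1/2 : ℝ)^n) := by
                have := ih ζ hζ σ hσ'
                gcongr
      have hsplit : u (n+2) ζ τ - u (n+1) ζ τ =
          ζ * (Complex.exp (-A) - Complex.exp (-B)) := by
        rw [hu_succ, hu_succ, ← hA_def, ← hB_def]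
        ring
      rw [hsplit, norm_mul]
      have h1 : ‖ζ‖ ≤ 1 := (mem_closedBall_zero_iff.mp hζ).trans hr1.le
      have h2 := exp_sub_exp_norm_le hAre hBre
      have h3 : ‖A - B‖ ≤ 2 * (1/2 : ℝ)^n * (1/2 : ℝ) := by
        have hτa : τ - a ≤ b - a := by linarith [hτ.2]
        have hKτ : K * (τ - a) ≤ 1/2 := by
          rcases le_or_gt K 0 with h | h
          · have : K * (τ - a) ≤ 0 :=
              mul_nonpos_of_nonpos_of_nonneg h (by linarith [hτ.1])
            linarith
          · calc K * (τ - a) ≤ K * (b - a) := by gcongr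
              _ ≤ 1/2 := hshort
        calc ‖A - B‖ ≤ K * (2 * (1/2 : ℝ)^n) * (τ - a) := hABnorm
          _ = 2 * (1/2 : ℝ)^n * (K * (τ - a)) := by ring
          _ ≤ 2 * (1/2 : ℝ)^n * (1/2) := by
              have h4 : (0:ℝ) ≤ 2 * (1/2 : ℝ)^n := by positivity
              nlinarith
      calc ‖ζ‖ * ‖Complex.exp (-A) - Complex.exp (-B)‖
          ≤ 1 * ‖A - B‖ := by
            refine mul_le_mul h1 h2 (norm_nonneg _) (by norm_num)
        _ ≤ 2 * (1/2 : ℝ)^(n+1) := by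
            rw [one_mul]
            calc ‖A - B‖ ≤ 2 * (1/2 : ℝ)^n * (1/2) := h3
              _ = 2 * (1/2 : ℝ)^(n+1) := by ring
  -- convergence of the iterates
  have hcauchy : ∀ ζ ∈ closedBall (0:ℂ) r, ∀ τ ∈ Icc a b,
      ∃ L : ℂ, Tendsto (fun n => u n ζ τ) atTop (𝓝 L) := by
    intro ζ hζ τ hτ
    have hc : CauchySeq (fun n => u n ζ τ) := by
      refine cauchySeq_of_le_geometric (1/2 : ℝ) 2 (by norm_num) ?_
      intro n
      rw [dist_eq_norm, norm_sub_rev]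
      exact hest n ζ hζ τ hτ
    exact cauchySeq_tendsto_of_complete hc
  have hch : ∀ ζ : ℂ, ∀ τ : ℝ, ∃ L : ℂ,
      (ζ ∈ closedBall (0:ℂ) r ∧ τ ∈ Icc a b) → Tendsto (fun n => u n ζ τ) atTop (𝓝 L) := by
    intro ζ τ
    by_cases h : ζ ∈ closedBall (0:ℂ) r ∧ τ ∈ Icc a b
    · obtain ⟨L, hL⟩ := hcauchy ζ h.1 τ h.2
      exact ⟨L, fun _ => hL⟩
    · exact ⟨0, fun h' => absurd h' h⟩
  choose Φ hΦ using hch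
  have htend : ∀ ζ ∈ closedBall (0:ℂ) r, ∀ τ ∈ Icc a b,
      Tendsto (fun n => u n ζ τ) atTop (𝓝 (Φ ζ τ)) := fun ζ hζ τ hτ => hΦ ζ τ ⟨hζ, hτ⟩
  -- uniform distance to the limit
  have hunif : ∀ n : ℕ, ∀ ζ ∈ closedBall (0:ℂ) r, ∀ τ ∈ Icc a b,
      ‖Φ ζ τ - u n ζ τ‖ ≤ 4 * (1/2 : ℝ)^n := by
    intro n ζ hζ τ hτ
    have h1 := dist_le_of_le_geometric_of_tendsto (1/2 : ℝ) 2 (by norm_num)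
      (fun m => by
        rw [dist_eq_norm, norm_sub_rev]
        exact hest m ζ hζ τ hτ) (htend ζ hζ τ hτ) n
    rw [dist_eq_norm, norm_sub_rev] at h1
    calc ‖Φ ζ τ - u n ζ τ‖ ≤ 2 * (1/2 : ℝ)^n / (1 - 1/2) := h1
      _ = 4 * (1/2 : ℝ)^n := by ring
  have hgeo0 : Tendsto (fun n : ℕ => 4 * (1/2 : ℝ)^n) atTop (𝓝 0) := by
    have := (tendsto_pow_atTop_nhds_zero_of_lt_one (by norm_num : (0:ℝ) ≤ 1/2)
      (by norm_num : (1/2:ℝ) < 1)).const_mul (4:ℝ)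
    simpa using this
  -- properties of the limit
  have hΦbdd : ∀ ζ ∈ closedBall (0:ℂ) r, ∀ τ ∈ Icc a b, ‖Φ ζ τ‖ ≤ ‖ζ‖ := by
    intro ζ hζ τ hτ
    refine le_of_tendsto ((htend ζ hζ τ hτ).norm) ?_
    exact Eventually.of_forall fun n => ((inv n).1 ζ hζ).1 τ hτ
  have hΦa : ∀ ζ ∈ closedBall (0:ℂ) r, Φ ζ a = ζ := by
    intro ζ hζ
    have hua : ∀ n, u n ζ a = ζ := by
      intro n
      cases n with
      | zero => rfl
      | succ n => rw [hu_succ, intervalIntegral.integral_same]; simp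
    have h1 : Tendsto (fun n => u n ζ a) atTop (𝓝 ζ) := by
      simp only [hua]
      exact tendsto_const_nhds
    exact tendsto_nhds_unique (htend ζ hζ a (left_mem_Icc.mpr hab)) h1
  have hΦunifOn : ∀ s : Set ℂ, s ⊆ closedBall (0:ℂ) r → ∀ τ ∈ Icc a b,
      TendstoUniformlyOn (fun n z => u n z τ) (fun z => Φ z τ) atTop s := by
    intro s hs τ hτ
    refine Metric.tendstoUniformlyOn_iff.mpr ?_
    intro ε hε
    filter_upwards [hgeo0.eventually (gt_mem_nhds hε)] with n hn z hz
    rw [dist_eq_norm]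
    exact lt_of_le_of_lt (hunif n z (hs hz) τ hτ) hn
  have hΦcont : ∀ ζ ∈ closedBall (0:ℂ) r, ContinuousOn (Φ ζ) (Icc a b) := by
    intro ζ hζ
    have huc : TendstoUniformlyOn (fun n τ => u n ζ τ) (Φ ζ) atTop (Icc a b) := by
      refine Metric.tendstoUniformlyOn_iff.mpr ?_
      intro ε hε
      filter_upwards [hgeo0.eventually (gt_mem_nhds hε)] with n hn τ hτ
      rw [dist_eq_norm]
      exact lt_of_le_of_lt (hunif n ζ hζ τ hτ) hn
    exact huc.continuousOn (Eventually.of_forall fun n => ((inv n).1 ζ hζ).2).frequently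
  have hΦdiff : ∀ τ ∈ Icc a b, DifferentiableOn ℂ (fun z => Φ z τ) (ball (0:ℂ) r) := by
    intro τ hτ
    exact ((hΦunifOn _ ball_subset_closedBall τ hτ).tendstoLocallyUniformlyOn).differentiableOn
      (Eventually.of_forall fun n => (inv n).2 τ hτ) isOpen_ball
  have hΦb1 : ∀ ζ ∈ closedBall (0:ℂ) r, ∀ σ ∈ Icc a b, ‖Φ ζ σ‖ ≤ 1 := fun ζ hζ σ hσ =>
    (hΦbdd ζ hζ σ hσ).trans ((mem_closedBall_zero_iff.mp hζ).trans hr1.le)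
  have hΦbr : ∀ ζ ∈ closedBall (0:ℂ) r, ∀ σ ∈ Icc a b, Φ ζ σ ∈ closedBall (0:ℂ) r :=
    fun ζ hζ σ hσ => mem_closedBall_zero_iff.mpr
      ((hΦbdd ζ hζ σ hσ).trans (mem_closedBall_zero_iff.mp hζ))
  -- the integral equation for the limit
  have hΦeq : ∀ ζ ∈ closedBall (0:ℂ) r, ∀ τ ∈ Icc a b,
      Φ ζ τ = ζ * Complex.exp (-∫ σ in a..τ, P (Φ ζ σ) σ) := by
    intro ζ hζ τ hτ
    have hwbm : ∀ m, ∀ σ ∈ Icc a b, ‖u m ζ σ‖ ≤ 1 := fun m σ hσ =>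
      (((inv m).1 ζ hζ).1 σ hσ).trans ((mem_closedBall_zero_iff.mp hζ).trans hr1.le)
    have hwbrm : ∀ m, ∀ σ ∈ Icc a b, u m ζ σ ∈ closedBall (0:ℂ) r := fun m σ hσ =>
      mem_closedBall_zero_iff.mpr ((((inv m).1 ζ hζ).1 σ hσ).trans (mem_closedBall_zero_iff.mp hζ))
    have hIn : Tendsto (fun n => ∫ σ in a..τ, P (u n ζ σ) σ) atTop
        (𝓝 (∫ σ in a..τ, P (Φ ζ σ) σ)) := by
      rw [tendsto_iff_dist_tendsto_zero]
      refine squeeze_zero (fun n => dist_nonneg) (g := fun n => K * (4 * (1/2:ℝ)^n) * (b - a))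
        ?_ ?_
      · intro n
        rw [dist_eq_norm, ← intervalIntegral.integral_sub
            (hInt _ ((inv n).1 ζ hζ).2 (hwbm n) τ hτ)
            (hInt _ (hΦcont ζ hζ) (hΦb1 ζ hζ) τ hτ)]
        have hb := intervalIntegral.norm_integral_le_of_norm_le_const
          (C := K * (4 * (1/2 : ℝ)^n)) (a := a) (b := τ)
          (f := fun σ => P (u n ζ σ) σ - P (Φ ζ σ) σ) ?_
        · calc ‖∫ σ in a..τ, (P (u n ζ σ) σ - P (Φ ζ σ) σ)‖
              ≤ K * (4 * (1/2 : ℝ)^n) * |τ - a| := hb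
            _ ≤ K * (4 * (1/2 : ℝ)^n) * (b - a) := by
                rw [_root_.abs_of_nonneg (by linarith [hτ.1] : (0:ℝ) ≤ τ - a)]
                have : (0:ℝ) ≤ K * (4 * (1/2 : ℝ)^n) := by positivity
                nlinarith [hτ.2, hτ.1]
        · intro σ hσ
          rw [uIoc_of_le hτ.1] at hσ
          have hσ' : σ ∈ Icc a b := ⟨hσ.1.le, hσ.2.trans hτ.2⟩
          calc ‖P (u n ζ σ) σ - P (Φ ζ σ) σ‖
              ≤ K * ‖u n ζ σ - Φ ζ σ‖ :=
                hLipP σ hσ' _ (hwbrm n σ hσ') _ (hΦbr ζ hζ σ hσ')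
            _ ≤ K * (4 * (1/2 : ℝ)^n) := by
                have := hunif n ζ hζ σ hσ'
                rw [norm_sub_rev] at this
                gcongr
      · have := hgeo0.const_mul K
        have h2 := this.mul_const (b - a)
        simpa using h2
    have hRHS : Tendsto (fun n => ζ * Complex.exp (-∫ σ in a..τ, P (u n ζ σ) σ)) atTop
        (𝓝 (ζ * Complex.exp (-∫ σ in a..τ, P (Φ ζ σ) σ))) :=
      (hIn.neg.cexp).const_mul ζ
    have hLHS : Tendsto (fun n => u (n+1) ζ τ) atTop (𝓝 (Φ ζ τ)) :=
      (htend ζ hζ τ hτ).comp (tendsto_add_atTop_nat 1)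
    have heq : (fun n => u (n+1) ζ τ) =
        fun n => ζ * Complex.exp (-∫ σ in a..τ, P (u n ζ σ) σ) := by
      funext n; exact hu_succ n ζ τ
    rw [heq] at hLHS
    exact tendsto_nhds_unique hLHS hRHS
  -- the derivative of the limit
  refine ⟨Φ, hΦdiff, fun ζ hζ => ⟨hΦa ζ hζ, hΦcont ζ hζ, fun τ hτ => ⟨hΦbdd ζ hζ τ hτ, ?_⟩⟩⟩
  obtain ⟨g, hgcont, hgeq⟩ := ext_cont hPjoint hVD hab hIcc (hΦcont ζ hζ) (hΦb1 ζ hζ)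
  have hA := primitive_hasDerivAt hgcont a τ
  have hh : HasDerivAt (fun τ' => ζ * Complex.exp (-∫ σ in a..τ', g σ))
      (ζ * (Complex.exp (-∫ σ in a..τ, g σ) * (-g τ))) τ := by
    have h1 : HasDerivAt (fun τ' => -∫ σ in a..τ', g σ) (-g τ) τ := hA.neg
    exact (h1.cexp).const_mul ζ
  have heqOn : ∀ τ' ∈ Icc a b, Φ ζ τ' = ζ * Complex.exp (-∫ σ in a..τ', g σ) := by
    intro τ' hτ'
    have hIeq : ∫ σ in a..τ', P (Φ ζ σ) σ = ∫ σ in a..τ', g σ := by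
      refine intervalIntegral.integral_congr ?_
      intro σ hσ
      rw [uIcc_of_le hτ'.1] at hσ
      exact (hgeq σ (hIcc_sub hτ' hσ)).symm
    rw [hΦeq ζ hζ τ' hτ', hIeq]
  have hd : HasDerivWithinAt (Φ ζ)
      (ζ * (Complex.exp (-∫ σ in a..τ, g σ) * (-g τ))) (Icc a b) τ :=
    (hh.hasDerivWithinAt).congr heqOn (heqOn τ hτ)
  have hval : ζ * (Complex.exp (-∫ σ in a..τ, g σ) * (-g τ)) =
      -(Φ ζ τ) * P (Φ ζ τ) τ := by
    rw [← hgeq τ hτ, heqOn τ hτ]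
    ring
  rwa [hval] at hd

lemma ode_unique_fwd {a b K : ℝ} (hab : a ≤ b) (hK0 : 0 ≤ K) {w₁ w₂ g₁ g₂ : ℝ → ℂ}
    (hd₁ : ∀ τ ∈ Icc a b, HasDerivWithinAt w₁ (g₁ τ) (Icc a b) τ)
    (hd₂ : ∀ τ ∈ Icc a b, HasDerivWithinAt w₂ (g₂ τ) (Icc a b) τ)
    (hlip : ∀ τ ∈ Icc a b, ‖g₁ τ - g₂ τ‖ ≤ K * ‖w₁ τ - w₂ τ‖)
    (ha : w₁ a = w₂ a) : ∀ τ ∈ Icc a b, w₁ τ = w₂ τ := by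
  have hcont : ContinuousOn (fun τ => w₁ τ - w₂ τ) (Icc a b) := fun τ hτ =>
    ((hd₁ τ hτ).continuousWithinAt).sub ((hd₂ τ hτ).continuousWithinAt)
  have hder : ∀ τ ∈ Ico a b,
      HasDerivWithinAt (fun τ' => w₁ τ' - w₂ τ') (g₁ τ - g₂ τ) (Ici τ) τ := by
    intro τ hτ
    have hmem : Icc a b ∈ 𝓝[Ici τ] τ :=
      Filter.mem_of_superset (Icc_mem_nhdsGE_of_mem ⟨le_rfl, hτ.2⟩)
        (Icc_subset_Icc hτ.1 le_rfl)
    exact (((hd₁ τ ⟨hτ.1, hτ.2.le⟩).sub (hd₂ τ ⟨hτ.1, hτ.2.le⟩)).mono_of_mem_nhdsWithin hmem)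
  have key := norm_le_gronwallBound_of_norm_deriv_right_le (δ := 0) (K := K) (ε := 0)
    hcont hder (by simp [ha]) ?_
  · intro τ hτ
    have h2 := key τ hτ
    rw [gronwallBound_ε0_δ0] at h2
    have h0 : w₁ τ - w₂ τ = 0 := norm_le_zero_iff.mp h2
    exact sub_eq_zero.mp h0
  · intro τ hτ
    simpa using hlip τ ⟨hτ.1, hτ.2.le⟩

lemma ode_unique_bwd {a b K : ℝ} (hab : a ≤ b) (hK0 : 0 ≤ K) {w₁ w₂ g₁ g₂ : ℝ → ℂ}
    (hd₁ : ∀ τ ∈ Icc a b, HasDerivWithinAt w₁ (g₁ τ) (Icc a b) τ)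
    (hd₂ : ∀ τ ∈ Icc a b, HasDerivWithinAt w₂ (g₂ τ) (Icc a b) τ)
    (hlip : ∀ τ ∈ Icc a b, ‖g₁ τ - g₂ τ‖ ≤ K * ‖w₁ τ - w₂ τ‖)
    (hb : w₁ b = w₂ b) : ∀ τ ∈ Icc a b, w₁ τ = w₂ τ := by
  have hφmem : ∀ τ ∈ Icc a b, a + b - τ ∈ Icc a b := by
    intro τ hτ
    exact ⟨by linarith [hτ.2], by linarith [hτ.1]⟩
  have hφd : ∀ τ : ℝ, HasDerivWithinAt (fun τ' => a + b - τ') (-1 : ℝ) (Icc a b) τ := by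
    intro τ
    exact ((hasDerivAt_id τ).const_sub (a + b)).hasDerivWithinAt
  have hrev : ∀ (w g : ℝ → ℂ), (∀ τ ∈ Icc a b, HasDerivWithinAt w (g τ) (Icc a b) τ) →
      ∀ τ ∈ Icc a b, HasDerivWithinAt (fun τ' => w (a + b - τ'))
        (-g (a + b - τ)) (Icc a b) τ := by
    intro w g hd τ hτ
    have := HasDerivWithinAt.scomp τ (hd _ (hφmem τ hτ)) (hφd τ)
      (fun x hx => hφmem x hx)
    rw [neg_one_smul] at this
    exact this
  have key := ode_unique_fwd hab hK0 (w₁ := fun τ => w₁ (a + b - τ))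
    (w₂ := fun τ => w₂ (a + b - τ)) (g₁ := fun τ => -g₁ (a + b - τ))
    (g₂ := fun τ => -g₂ (a + b - τ))
    (hrev w₁ g₁ hd₁) (hrev w₂ g₂ hd₂) ?_ ?_
  · intro τ hτ
    have := key (a + b - τ) (hφmem τ hτ)
    simpa using this
  · intro τ hτ
    have h1 := hlip (a + b - τ) (hφmem τ hτ)
    calc ‖-g₁ (a + b - τ) - -g₂ (a + b - τ)‖ = ‖g₁ (a + b - τ) - g₂ (a + b - τ)‖ := by
          rw [← norm_neg]; ring_nf
      _ ≤ K * ‖w₁ (a + b - τ) - w₂ (a + b - τ)‖ := h1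
  · simpa using hb

lemma f_const_along {I : Set ℝ} {U : Set ℂ} {f : ℂ → ℝ → ℂ} {P : ℂ → ℝ → ℂ}
    (hI : I.OrdConnected) (hU : IsOpen U) (hUD : closedBall (0 : ℂ) 1 ⊆ U)
    (hsmooth : ContDiffOn ℝ (⊤ : ℕ∞) (fun p : ℂ × ℝ => f p.1 p.2) (U ×ˢ I))
    (hanal : ∀ t ∈ I, DifferentiableOn ℂ (fun ζ => f ζ t) U)
    (hLK : ∀ t ∈ I, ∀ ζ ∈ ball (0 : ℂ) 1,
      deriv (f ζ) t = ζ * deriv (fun z => f z t) ζ * P ζ t)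
    {s t : ℝ} (hs : s ∈ I) (ht : t ∈ I) (hst : s ≤ t)
    {w : ℝ → ℂ}
    (hw_cont : ContinuousOn w (Icc s t))
    (hw_mem : ∀ τ ∈ Icc s t, w τ ∈ ball (0 : ℂ) 1)
    (hw_deriv : ∀ τ ∈ Ioo s t, HasDerivAt w (-(w τ) * P (w τ) τ) τ) :
    f (w s) s = f (w t) t := by
  rcases eq_or_lt_of_le hst with rfl | hlt
  · rfl
  have hIccI : Icc s t ⊆ I := hI.out hs ht
  have hIooI : Ioo s t ⊆ I := fun τ hτ => hIccI (Ioo_subset_Icc_self hτ)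
  have hmemU : ∀ τ ∈ Icc s t, w τ ∈ U := fun τ hτ =>
    hUD (ball_subset_closedBall (hw_mem τ hτ))
  set F : ℝ → ℂ := fun τ => f (w τ) τ with hF_def
  have hFcont : ContinuousOn F (Icc s t) := by
    refine (hsmooth.continuousOn).comp (hw_cont.prodMk continuousOn_id) ?_
    intro τ hτ
    exact ⟨hmemU τ hτ, hIccI hτ⟩
  have hF0 : ∀ τ ∈ Ioo s t, HasDerivAt F 0 τ := by
    intro τ hτ
    have hτI : τ ∈ I := hIooI hτ
    have hτIcc : τ ∈ Icc s t := Ioo_subset_Icc_self hτ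
    have hInhds : I ∈ 𝓝 τ := mem_nhds_iff.mpr ⟨Ioo s t, hIooI, isOpen_Ioo, hτ⟩
    have hpmem : U ×ˢ I ∈ 𝓝 ((w τ, τ) : ℂ × ℝ) :=
      prod_mem_nhds (hU.mem_nhds (hmemU τ hτIcc)) hInhds
    have hFd : DifferentiableAt ℝ (fun p : ℂ × ℝ => f p.1 p.2) (w τ, τ) :=
      ((hsmooth.contDiffAt hpmem).differentiableAt (by simp))
    set D := fderiv ℝ (fun p : ℂ × ℝ => f p.1 p.2) (w τ, τ) with hD_def
    have hD : HasFDerivAt (fun p : ℂ × ℝ => f p.1 p.2) D (w τ, τ) := hFd.hasFDerivAt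
    -- the curve
    have hc : HasDerivAt (fun τ' => ((w τ', τ') : ℂ × ℝ))
        (-(w τ) * P (w τ) τ, 1) τ := (hw_deriv τ hτ).prodMk (hasDerivAt_id τ)
    have hchain : HasDerivAt F (D (-(w τ) * P (w τ) τ, 1)) τ :=
      hD.comp_hasDerivAt (f := fun τ' => ((w τ', τ') : ℂ × ℝ)) τ hc
    -- the ζ-partial
    set dz := deriv (fun z => f z τ) (w τ) with hdz_def
    have hfz : HasDerivAt (fun z => f z τ) dz (w τ) :=
      ((hanal τ hτI).differentiableAt (hU.mem_nhds (hmemU τ hτIcc))).hasDerivAt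
    have hpart1 : D (-(w τ) * P (w τ) τ, (0:ℝ)) = dz * (-(w τ) * P (w τ) τ) := by
      have he : HasFDerivAt (fun z : ℂ => ((z, τ) : ℂ × ℝ))
          ((ContinuousLinearMap.id ℝ ℂ).prod 0) (w τ) :=
        (hasFDerivAt_id (w τ)).prodMk (hasFDerivAt_const τ (w τ))
      have hcomp : HasFDerivAt (fun z : ℂ => f z τ)
          (D.comp ((ContinuousLinearMap.id ℝ ℂ).prod 0)) (w τ) := by
          have h := hD.comp (w τ) he; exact h
      have huniq := hcomp.unique ((hfz.hasFDerivAt).restrictScalars ℝ)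
      have happ : D (-(w τ) * P (w τ) τ, (0:ℝ)) = (-(w τ) * P (w τ) τ) * dz := by
        have h := congrArg (fun (L : ℂ →L[ℝ] ℂ) => L (-(w τ) * P (w τ) τ)) huniq
        simpa using h
      exact happ.trans (by ring)
    -- the t-partial
    have hpart2 : D ((0:ℂ), (1:ℝ)) = (w τ) * dz * P (w τ) τ := by
      have he : HasFDerivAt (fun τ' : ℝ => ((w τ, τ') : ℂ × ℝ))
          ((0 : ℝ →L[ℝ] ℂ).prod (ContinuousLinearMap.id ℝ ℝ)) τ :=
        (hasFDerivAt_const (w τ) τ).prodMk (hasFDerivAt_id τ)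
      have hcomp : HasFDerivAt (f (w τ))
          (D.comp ((0 : ℝ →L[ℝ] ℂ).prod (ContinuousLinearMap.id ℝ ℝ))) τ :=
        hD.comp τ he
      have hder : HasDerivAt (f (w τ))
          ((D.comp ((0 : ℝ →L[ℝ] ℂ).prod (ContinuousLinearMap.id ℝ ℝ))) 1) τ :=
        hcomp.hasDerivAt
      have h2 : D ((0:ℂ), (1:ℝ)) = deriv (f (w τ)) τ := by
        rw [hder.deriv]
        simp
      rw [h2, hLK τ hτI (w τ) (hw_mem τ hτIcc), hdz_def]
    have hsplit : D (-(w τ) * P (w τ) τ, 1) =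
        D (-(w τ) * P (w τ) τ, (0:ℝ)) + D ((0:ℂ), (1:ℝ)) := by
      rw [← map_add]
      norm_num
    have hzero : D (-(w τ) * P (w τ) τ, 1) = 0 := by
      rw [hsplit, hpart1, hpart2]
      ring
    rwa [hzero] at hchain
  -- constancy on the open interval, then continuity at the endpoints
  set m : ℝ := (s + t) / 2 with hm_def
  have hmIoo : m ∈ Ioo s t := ⟨by rw [hm_def]; linarith, by rw [hm_def]; linarith⟩
  have hconst : ∀ x ∈ Ioo s t, F x = F m := by
    have hpair : ∀ x ∈ Ioo s t, ∀ y ∈ Ioo s t, x ≤ y → F y = F x := by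
      intro x hx y hy hxy
      have hsub : Icc x y ⊆ Ioo s t := fun z hz => ⟨hx.1.trans_le hz.1, hz.2.trans_lt hy.2⟩
      have := constant_of_has_deriv_right_zero
        (f := F) (a := x) (b := y)
        (hFcont.mono (hsub.trans Ioo_subset_Icc_self))
        (fun z hz => (hF0 z (hsub ⟨hz.1, hz.2.le⟩)).hasDerivWithinAt)
      exact this y (right_mem_Icc.mpr hxy)
    intro x hx
    rcases le_total x m with h | h
    · exact (hpair x hx m hmIoo h).symm
    · exact hpair m hmIoo x hx h
  have hne : ∀ c ∈ Icc s t, (𝓝[Ioo s t] c).NeBot := by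
    intro c hc
    refine mem_closure_iff_nhdsWithin_neBot.mp ?_
    rw [closure_Ioo hlt.ne]
    exact hc
  have hend : ∀ c ∈ Icc s t, F c = F m := by
    intro c hc
    rcases eq_or_ne c m with rfl | hcm
    · rfl
    haveI := hne c hc
    have h1 : Tendsto F (𝓝[Ioo s t] c) (𝓝 (F c)) :=
      ((hFcont c hc).mono Ioo_subset_Icc_self)
    have h2 : Tendsto F (𝓝[Ioo s t] c) (𝓝 (F m)) := by
      refine Tendsto.congr' ?_ tendsto_const_nhds
      exact (eventually_nhdsWithin_of_forall fun x hx => (hconst x hx).symm)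
    exact tendsto_nhds_unique h1 h2
  show F s = F t
  rw [hend s (left_mem_Icc.mpr hst), hend t (right_mem_Icc.mpr hst)]

/-- If a smooth normalized family `f(ζ,t)` with `∂_ζ f ≠ 0` on the unit circle
solves the Löwner–Kufarev equation `∂_t f = ζ ∂_ζ f · P(ζ,t)`, where `P(·,t)` is the Poisson
extension of `q(t)/|∂_ζ f|²` (assumed analytic in a neighborhood `V` of the closed unit disk and
jointly continuous on `V × I`), then `{f(·,t)}` is a subordination chain: for `s ≤ t` in `I`
there is an injective analytic self-map `φ` of `𝔻` with `f(ζ,s) = f(φ(ζ),t)` on `𝔻`. -/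
theorem lownerKufarev_subordination_chain
    (I : Set ℝ) (hI : I.OrdConnected)
    (U : Set ℂ) (hU : IsOpen U) (hUD : closedBall (0 : ℂ) 1 ⊆ U)
    (f : ℂ → ℝ → ℂ)
    (hsmooth : ContDiffOn ℝ (⊤ : ℕ∞) (fun p : ℂ × ℝ => f p.1 p.2) (U ×ˢ I))
    (hanal : ∀ t ∈ I, DifferentiableOn ℂ (fun ζ => f ζ t) U)
    (hnorm0 : ∀ t ∈ I, f 0 t = 0)
    (hnorm1 : ∀ t ∈ I, (deriv (fun ζ => f ζ t) 0).im = 0 ∧ 0 < (deriv (fun ζ => f ζ t) 0).re)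
    (hne : ∀ t ∈ I, ∀ ζ : ℂ, ‖ζ‖ = 1 → deriv (fun z => f z t) ζ ≠ 0)
    (q : ℝ → ℝ) (hq : ∀ t ∈ I, 0 ≤ q t)
    (V : Set ℂ) (hV : IsOpen V) (hVD : closedBall (0 : ℂ) 1 ⊆ V)
    (P : ℂ → ℝ → ℂ)
    (hPanal : ∀ t ∈ I, DifferentiableOn ℂ (fun ζ => P ζ t) V)
    (hPjoint : ContinuousOn (fun p : ℂ × ℝ => P p.1 p.2) (V ×ˢ I))
    (hPre : ∀ t ∈ I, ∀ ζ : ℂ, ‖ζ‖ = 1 →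
      (P ζ t).re = q t / ‖deriv (fun z => f z t) ζ‖ ^ 2)
    (hPim : ∀ t ∈ I, (P 0 t).im = 0)
    (hLK : ∀ t ∈ I, ∀ ζ ∈ ball (0 : ℂ) 1,
      deriv (f ζ) t = ζ * deriv (fun z => f z t) ζ * P ζ t) :
    ∀ s ∈ I, ∀ t ∈ I, s ≤ t →
      ∃ φ : ℂ → ℂ, DifferentiableOn ℂ φ (ball (0 : ℂ) 1) ∧
        MapsTo φ (ball (0 : ℂ) 1) (ball (0 : ℂ) 1) ∧
        InjOn φ (ball (0 : ℂ) 1) ∧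
        ∀ ζ ∈ ball (0 : ℂ) 1, f ζ s = f (φ ζ) t := by
  intro s hs t ht hst
  -- trivial case s = t
  rcases eq_or_lt_of_le hst with rfl | hlt
  · refine ⟨fun ζ => ζ,
      (differentiable_id : Differentiable ℂ (fun z : ℂ => z)).differentiableOn,
      fun ζ h => h, fun x _ y _ h => h, fun ζ _ => rfl⟩
  have hIccI : Icc s t ⊆ I := hI.out hs ht
  -- positivity of the real part of P on the closed disk
  have hRe : ∀ τ ∈ I, ∀ z ∈ closedBall (0:ℂ) 1, 0 ≤ (P z τ).re := by
    intro τ hτ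
    refine rePos_of_rePos_sphere hV hVD (hPanal τ hτ) ?_
    intro z hz
    rw [hPre τ hτ z hz]
    exact div_nonneg (hq τ hτ) (sq_nonneg _)
  -- Lipschitz constants on closed balls of radius r < 1
  have hKex : ∀ r : ℝ, 0 ≤ r → r < 1 → ∃ K : ℝ, 0 ≤ K ∧
      (∀ σ ∈ Icc s t, ∀ x ∈ closedBall (0:ℂ) r, ∀ y ∈ closedBall (0:ℂ) r,
        ‖P x σ - P y σ‖ ≤ K * ‖x - y‖) ∧
      (∀ σ ∈ Icc s t, ∀ x ∈ closedBall (0:ℂ) r, ∀ y ∈ closedBall (0:ℂ) r,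
        ‖x * P x σ - y * P y σ‖ ≤ K * ‖x - y‖) := by
    intro r h0r hr1
    set r1 : ℝ := (1 + r) / 2 with hr1_def
    have hrr1 : r < r1 := by rw [hr1_def]; linarith
    have hr11 : r1 < 1 := by rw [hr1_def]; linarith
    have hr10 : 0 ≤ r1 := by rw [hr1_def]; linarith
    have hcomp : IsCompact ((closedBall (0:ℂ) r1) ×ˢ (Icc s t)) :=
      (isCompact_closedBall _ _).prod isCompact_Icc
    have hsubV : closedBall (0:ℂ) r1 ⊆ V := fun z hz =>
      hVD (closedBall_subset_closedBall hr11.le hz)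
    have hcont : ContinuousOn (fun p : ℂ × ℝ => P p.1 p.2)
        ((closedBall (0:ℂ) r1) ×ˢ (Icc s t)) :=
      hPjoint.mono (prod_mono hsubV hIccI)
    obtain ⟨M0, hM0⟩ := hcomp.exists_bound_of_continuousOn hcont
    set M : ℝ := max M0 0 with hM_def
    have hM : ∀ z ∈ closedBall (0:ℂ) r1, ∀ σ ∈ Icc s t, ‖P z σ‖ ≤ M := by
      intro z hz σ hσ
      exact (hM0 (z, σ) ⟨hz, hσ⟩).trans (le_max_left _ _)
    have hM0' : 0 ≤ M := le_max_right _ _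
    have hr1r : 0 < r1 - r := by linarith
    refine ⟨(2 * M + 1) / (r1 - r), div_nonneg (by linarith) hr1r.le, ?_, ?_⟩
    · intro σ hσ x hx y hy
      refine lip_of_bounded (g := fun z => P z σ) (R2 := r1) (M := M) h0r hrr1 ?_ ?_ x hx y hy
      · exact (hPanal σ (hIccI hσ)).mono ((ball_subset_closedBall).trans hsubV)
      · intro z hz
        exact hM z (ball_subset_closedBall hz) σ hσ
    · intro σ hσ x hx y hy
      refine lip_of_bounded (g := fun z => z * P z σ) (R2 := r1) (M := M) h0r hrr1
        ?_ ?_ x hx y hy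
      · exact (differentiable_id.differentiableOn).mul
          ((hPanal σ (hIccI hσ)).mono ((ball_subset_closedBall).trans hsubV))
      · intro z hz
        have hz1 : ‖z‖ ≤ 1 := (mem_ball_zero_iff.mp hz).le.trans hr11.le
        calc ‖z * P z σ‖ = ‖z‖ * ‖P z σ‖ := norm_mul _ _
          _ ≤ 1 * M := by
              refine mul_le_mul hz1 (hM z (ball_subset_closedBall hz) σ hσ)
                (norm_nonneg _) zero_le_one
          _ = M := one_mul _
    -- (the same constant works for both)
  -- the glued flow on [s,t], for each radius r
  have hGlue : ∀ r : ℝ, 0 ≤ r → r < 1 → ∃ Ψ : ℂ → ℂ,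
      DifferentiableOn ℂ Ψ (ball (0:ℂ) r) ∧ ∀ ζ ∈ closedBall (0:ℂ) r,
        ‖Ψ ζ‖ ≤ ‖ζ‖ ∧ ∃ w : ℝ → ℂ, w s = ζ ∧ w t = Ψ ζ ∧
          ∀ τ ∈ Icc s t, ‖w τ‖ ≤ ‖ζ‖ ∧
            HasDerivWithinAt w (-(w τ) * P (w τ) τ) (Icc s t) τ := by
    intro r h0r hr1
    obtain ⟨K, hK0, hKP, hKzP⟩ := hKex r h0r hr1
    set N : ℕ := ⌈2 * K * (t - s)⌉₊ + 1 with hN_def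
    have hN0 : 0 < N := Nat.succ_pos _
    have hNR : (0:ℝ) < N := Nat.cast_pos.mpr hN0
    set δ : ℝ := (t - s) / N with hδ_def
    have hδ0 : 0 < δ := by
      rw [hδ_def]
      exact div_pos (by linarith) hNR
    have hx : 2 * K * (t - s) ≤ (N : ℝ) := by
      have h1 := Nat.le_ceil (2 * K * (t - s))
      have h2 : ((⌈2 * K * (t - s)⌉₊ : ℝ)) ≤ ((⌈2 * K * (t - s)⌉₊ + 1 : ℕ) : ℝ) := by
        push_cast; linarith
      rw [hN_def]
      exact h1.trans h2
    have hshortp : K * δ ≤ 1/2 := by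
      rw [hδ_def]
      rw [mul_div_assoc'] at *
      rw [div_le_iff₀ hNR]
      nlinarith
    have hNt : s + (N : ℝ) * δ = t := by
      rw [hδ_def]
      field_simp
      ring
    -- the inductive construction
    have hQ : ∀ k : ℕ, k ≤ N → ∃ Ψ : ℂ → ℂ,
        DifferentiableOn ℂ Ψ (ball (0:ℂ) r) ∧ ∀ ζ ∈ closedBall (0:ℂ) r,
          ‖Ψ ζ‖ ≤ ‖ζ‖ ∧ ∃ w : ℝ → ℂ, w s = ζ ∧ w (s + k * δ) = Ψ ζ ∧
            ∀ τ ∈ Icc s (s + k * δ), ‖w τ‖ ≤ ‖ζ‖ ∧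
              HasDerivWithinAt w (-(w τ) * P (w τ) τ) (Icc s (s + k * δ)) τ := by
      intro k
      induction k with
      | zero =>
        intro _
        obtain ⟨Φ, hΦd, hΦp⟩ := step_flow hV hVD hPanal hPjoint hRe (le_refl s)
          (fun x hx => hIccI ⟨hx.1, hx.2.trans hst⟩) h0r hr1 hK0
          (fun σ hσ => hKP σ ⟨hσ.1, hσ.2.trans hst⟩) (by simp [hK0])
        refine ⟨fun ζ => Φ ζ s, ?_, ?_⟩
        · exact hΦd s ⟨le_rfl, le_rfl⟩
        · intro ζ hζ
          obtain ⟨hΦa, hΦc, hΦt⟩ := hΦp ζ hζ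
          have hsimp : s + (0:ℕ) * δ = s := by push_cast; ring
          rw [hsimp]
          refine ⟨?_, Φ ζ, hΦa, rfl, fun τ hτ => hΦt τ hτ⟩
          show ‖Φ ζ s‖ ≤ ‖ζ‖
          rw [hΦa]
      | succ k ih =>
        intro hk1
        obtain ⟨Ψk, hΨkd, hΨkp⟩ := ih (Nat.le_of_succ_le hk1)
        set a : ℝ := s + k * δ with ha_def
        set b : ℝ := s + (k + 1 : ℕ) * δ with hb_def
        have hba : b = a + δ := by rw [ha_def, hb_def]; push_cast; ring
        have hsa : s ≤ a := by
          rw [ha_def]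
          have : (0:ℝ) ≤ (k:ℝ) * δ := by positivity
          linarith
        have habl : a < b := by rw [hba]; linarith
        have hbt : b ≤ t := by
          rw [hb_def, ← hNt]
          have hkN : ((k+1 : ℕ):ℝ) ≤ (N:ℝ) := by exact_mod_cast hk1
          nlinarith
        have hIccab : Icc a b ⊆ Icc s t := Icc_subset_Icc hsa hbt
        obtain ⟨Φ, hΦd, hΦp⟩ := step_flow hV hVD hPanal hPjoint hRe habl.le
          (fun x hx => hIccI (hIccab hx)) h0r hr1 hK0
          (fun σ hσ => hKP σ (hIccab hσ))
          (by rw [hba]; simpa using hshortp)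
        refine ⟨fun ζ => Φ (Ψk ζ) b, ?_, ?_⟩
        · refine DifferentiableOn.comp (hΦd b ⟨habl.le, le_rfl⟩) hΨkd ?_
          intro ζ hζ
          rw [mem_ball_zero_iff]
          exact lt_of_le_of_lt ((hΨkp ζ (ball_subset_closedBall hζ)).1)
            (mem_ball_zero_iff.mp hζ)
        · intro ζ hζ
          obtain ⟨hΨkb, w, hws, hwa, hwp⟩ := hΨkp ζ hζ
          have hζk : Ψk ζ ∈ closedBall (0:ℂ) r :=
            mem_closedBall_zero_iff.mpr (hΨkb.trans (mem_closedBall_zero_iff.mp hζ))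
          obtain ⟨hΦa, hΦc, hΦt⟩ := hΦp (Ψk ζ) hζk
          constructor
          · calc ‖Φ (Ψk ζ) b‖ ≤ ‖Ψk ζ‖ := (hΦt b ⟨habl.le, le_rfl⟩).1
              _ ≤ ‖ζ‖ := hΨkb
          -- the glued solution
          set w' : ℝ → ℂ := fun τ => if τ ≤ a then w τ else Φ (Ψk ζ) τ with hw'_def
          have hw'eq1 : ∀ y ∈ Icc s a, w' y = w y := fun y hy => if_pos hy.2
          have hw'eq2 : ∀ y ∈ Icc a b, w' y = Φ (Ψk ζ) y := by
            intro y hy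
            rcases le_or_gt y a with h | h
            · have hya : y = a := le_antisymm h hy.1
              rw [hya]
              show w' a = Φ (Ψk ζ) a
              rw [hΦa]
              calc w' a = w a := if_pos le_rfl
                _ = Ψk ζ := hwa
            · exact if_neg (not_le.mpr h)
          refine ⟨w', ?_, ?_, ?_⟩
          · calc w' s = w s := hw'eq1 s ⟨le_rfl, hsa⟩
              _ = ζ := hws
          · calc w' b = Φ (Ψk ζ) b := hw'eq2 b ⟨habl.le, le_rfl⟩
              _ = Φ (Ψk ζ) b := rfl
          · intro τ hτ
            have hIccsb : Icc s a ∪ Icc a b = Icc s b := Icc_union_Icc_eq_Icc hsa habl.le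
            constructor
            · rcases le_or_gt τ a with h | h
              · have hvv : w' τ = w τ := if_pos h
                rw [hvv]
                exact (hwp τ ⟨hτ.1, h⟩).1
              · have hvv : w' τ = Φ (Ψk ζ) τ := if_neg (not_le.mpr h)
                rw [hvv]
                calc ‖Φ (Ψk ζ) τ‖ ≤ ‖Ψk ζ‖ := (hΦt τ ⟨h.le, hτ.2⟩).1
                  _ ≤ ‖ζ‖ := hΨkb
            · rcases lt_trichotomy τ a with h | h | h
              · -- τ < a : use the old solution
                have hbase := (hwp τ ⟨hτ.1, h.le⟩).2
                have hmem : Icc s a ∈ 𝓝[Icc s b] τ := by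
                  refine Filter.mem_of_superset
                    (inter_mem_nhdsWithin (Icc s b) (Iio_mem_nhds h)) ?_
                  intro x hx
                  exact ⟨hx.1.1, hx.2.le⟩
                have h1 := hbase.mono_of_mem_nhdsWithin hmem
                have hev : w' =ᶠ[𝓝[Icc s b] τ] w := by
                  refine Filter.eventuallyEq_of_mem
                    (mem_nhdsWithin_of_mem_nhds (Iic_mem_nhds h)) ?_
                  intro y hy
                  exact if_pos hy
                have h2 := h1.congr_of_eventuallyEq hev (if_pos h.le)
                have hval : w' τ = w τ := if_pos h.le
                rw [hval]
                exact h2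
              · -- τ = a : combine both one-sided derivatives
                subst h
                have hval : w' a = w a := if_pos le_rfl
                have h1 : HasDerivWithinAt w' (-(w' a) * P (w' a) a) (Icc s a) a := by
                  have hbase := (hwp a ⟨hsa, le_rfl⟩).2
                  refine HasDerivWithinAt.congr ?_ hw'eq1 (hw'eq1 a ⟨hsa, le_rfl⟩)
                  rw [hval]
                  exact hbase
                have h2 : HasDerivWithinAt w' (-(w' a) * P (w' a) a) (Icc a b) a := by
                  have hbase := (hΦt a ⟨le_rfl, habl.le⟩).2
                  have h4 : w' a = Φ (Ψk ζ) a := hw'eq2 a ⟨le_rfl, habl.le⟩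
                  refine HasDerivWithinAt.congr ?_ hw'eq2 h4
                  rw [h4]
                  exact hbase
                have h3 := h1.union h2
                rwa [Icc_union_Icc_eq_Icc hsa habl.le] at h3
              · -- τ > a : use the new flow
                have hbase := (hΦt τ ⟨h.le, hτ.2⟩).2
                have hmem : Icc a b ∈ 𝓝[Icc s b] τ := by
                  refine Filter.mem_of_superset
                    (inter_mem_nhdsWithin (Icc s b) (Ioi_mem_nhds h)) ?_
                  intro x hx
                  exact ⟨hx.2.le, hx.1.2⟩
                have h1 := hbase.mono_of_mem_nhdsWithin hmem
                have hev : w' =ᶠ[𝓝[Icc s b] τ] Φ (Ψk ζ) := by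
                  refine Filter.eventuallyEq_of_mem
                    (mem_nhdsWithin_of_mem_nhds (Ioi_mem_nhds h)) ?_
                  intro y hy
                  exact if_neg (not_le.mpr hy)
                have h2 := h1.congr_of_eventuallyEq hev (if_neg (not_le.mpr h))
                have hval : w' τ = Φ (Ψk ζ) τ := if_neg (not_le.mpr h)
                rw [hval]
                exact h2
    obtain ⟨Ψ, hΨd, hΨp⟩ := hQ N le_rfl
    rw [hNt] at hΨp
    exact ⟨Ψ, hΨd, hΨp⟩
  -- uniqueness of solutions
  have hUfwd : ∀ r : ℝ, 0 ≤ r → r < 1 → ∀ ζ : ℂ, ‖ζ‖ ≤ r → ∀ w₁ w₂ : ℝ → ℂ,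
      w₁ s = ζ → w₂ s = ζ →
      (∀ τ ∈ Icc s t, ‖w₁ τ‖ ≤ ‖ζ‖ ∧ HasDerivWithinAt w₁ (-(w₁ τ) * P (w₁ τ) τ) (Icc s t) τ) →
      (∀ τ ∈ Icc s t, ‖w₂ τ‖ ≤ ‖ζ‖ ∧ HasDerivWithinAt w₂ (-(w₂ τ) * P (w₂ τ) τ) (Icc s t) τ) →
      ∀ τ ∈ Icc s t, w₁ τ = w₂ τ := by
    intro r h0r hr1 ζ hζ w₁ w₂ h1s h2s h1 h2
    obtain ⟨K, hK0, hKP, hKzP⟩ := hKex r h0r hr1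
    refine ode_unique_fwd hst hK0 (g₁ := fun τ => -(w₁ τ) * P (w₁ τ) τ)
      (g₂ := fun τ => -(w₂ τ) * P (w₂ τ) τ)
      (fun τ hτ => (h1 τ hτ).2) (fun τ hτ => (h2 τ hτ).2) ?_ (by rw [h1s, h2s])
    intro τ hτ
    have hm1 : w₁ τ ∈ closedBall (0:ℂ) r :=
      mem_closedBall_zero_iff.mpr (((h1 τ hτ).1).trans hζ)
    have hm2 : w₂ τ ∈ closedBall (0:ℂ) r :=
      mem_closedBall_zero_iff.mpr (((h2 τ hτ).1).trans hζ)
    have := hKzP τ hτ _ hm1 _ hm2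
    calc ‖-(w₁ τ) * P (w₁ τ) τ - -(w₂ τ) * P (w₂ τ) τ‖
        = ‖w₁ τ * P (w₁ τ) τ - w₂ τ * P (w₂ τ) τ‖ := by
          rw [← norm_neg]; ring_nf
      _ ≤ K * ‖w₁ τ - w₂ τ‖ := this
  have hUbwd : ∀ r : ℝ, 0 ≤ r → r < 1 → ∀ ζ₁ ζ₂ : ℂ, ‖ζ₁‖ ≤ r → ‖ζ₂‖ ≤ r →
      ∀ w₁ w₂ : ℝ → ℂ, w₁ s = ζ₁ → w₂ s = ζ₂ →
      (∀ τ ∈ Icc s t, ‖w₁ τ‖ ≤ ‖ζ₁‖ ∧ HasDerivWithinAt w₁ (-(w₁ τ) * P (w₁ τ) τ) (Icc s t) τ) →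
      (∀ τ ∈ Icc s t, ‖w₂ τ‖ ≤ ‖ζ₂‖ ∧ HasDerivWithinAt w₂ (-(w₂ τ) * P (w₂ τ) τ) (Icc s t) τ) →
      w₁ t = w₂ t → ζ₁ = ζ₂ := by
    intro r h0r hr1 ζ₁ ζ₂ hζ₁ hζ₂ w₁ w₂ h1s h2s h1 h2 htt
    obtain ⟨K, hK0, hKP, hKzP⟩ := hKex r h0r hr1
    have key := ode_unique_bwd hst hK0 (g₁ := fun τ => -(w₁ τ) * P (w₁ τ) τ)
      (g₂ := fun τ => -(w₂ τ) * P (w₂ τ) τ)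
      (fun τ hτ => (h1 τ hτ).2) (fun τ hτ => (h2 τ hτ).2) ?_ htt
    · rw [← h1s, ← h2s]
      exact key s (left_mem_Icc.mpr hst)
    · intro τ hτ
      have hm1 : w₁ τ ∈ closedBall (0:ℂ) r :=
        mem_closedBall_zero_iff.mpr (((h1 τ hτ).1).trans hζ₁)
      have hm2 : w₂ τ ∈ closedBall (0:ℂ) r :=
        mem_closedBall_zero_iff.mpr (((h2 τ hτ).1).trans hζ₂)
      have := hKzP τ hτ _ hm1 _ hm2
      calc ‖-(w₁ τ) * P (w₁ τ) τ - -(w₂ τ) * P (w₂ τ) τ‖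
          = ‖w₁ τ * P (w₁ τ) τ - w₂ τ * P (w₂ τ) τ‖ := by
            rw [← norm_neg]; ring_nf
        _ ≤ K * ‖w₁ τ - w₂ τ‖ := this
  -- choose the flows
  have hGlue' : ∀ r : ℝ, ∃ Ψ : ℂ → ℂ, (0 ≤ r ∧ r < 1) →
      (DifferentiableOn ℂ Ψ (ball (0:ℂ) r) ∧ ∀ ζ ∈ closedBall (0:ℂ) r,
        ‖Ψ ζ‖ ≤ ‖ζ‖ ∧ ∃ w : ℝ → ℂ, w s = ζ ∧ w t = Ψ ζ ∧
          ∀ τ ∈ Icc s t, ‖w τ‖ ≤ ‖ζ‖ ∧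
            HasDerivWithinAt w (-(w τ) * P (w τ) τ) (Icc s t) τ) := by
    intro r
    by_cases h : 0 ≤ r ∧ r < 1
    · obtain ⟨Ψ, hΨ⟩ := hGlue r h.1 h.2
      exact ⟨Ψ, fun _ => hΨ⟩
    · exact ⟨id, fun h' => absurd h' h⟩
  choose Ψf hΨf using hGlue'
  set φ : ℂ → ℂ := fun ζ => Ψf ((1 + ‖ζ‖) / 2) ζ with hφ_def
  have hrprop : ∀ ζ : ℂ, ‖ζ‖ < 1 →
      0 ≤ (1 + ‖ζ‖)/2 ∧ (1 + ‖ζ‖)/2 < 1 ∧ ‖ζ‖ ≤ (1 + ‖ζ‖)/2 := by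
    intro ζ h
    have := norm_nonneg ζ
    exact ⟨by linarith, by linarith, by linarith⟩
  -- each φ ζ is the endpoint of a solution
  have hsolφ : ∀ ζ : ℂ, ‖ζ‖ < 1 → ‖φ ζ‖ ≤ ‖ζ‖ ∧ ∃ w : ℝ → ℂ, w s = ζ ∧ w t = φ ζ ∧
      ∀ τ ∈ Icc s t, ‖w τ‖ ≤ ‖ζ‖ ∧
        HasDerivWithinAt w (-(w τ) * P (w τ) τ) (Icc s t) τ := by
    intro ζ h
    obtain ⟨h0, h1, h2⟩ := hrprop ζ h
    exact (hΨf ((1 + ‖ζ‖)/2) ⟨h0, h1⟩).2 ζ (mem_closedBall_zero_iff.mpr h2)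
  -- consistency of the choices
  have hcons : ∀ ζ : ℂ, ‖ζ‖ < 1 → ∀ r : ℝ, 0 ≤ r → r < 1 → ‖ζ‖ ≤ r →
      Ψf r ζ = φ ζ := by
    intro ζ h r h0r hr1 hζr
    obtain ⟨hb1, w₁, hw₁s, hw₁t, hw₁p⟩ :=
      (hΨf r ⟨h0r, hr1⟩).2 ζ (mem_closedBall_zero_iff.mpr hζr)
    obtain ⟨w₂, hw₂s, hw₂t, hw₂p⟩ := (hsolφ ζ h).2
    set rm : ℝ := max r ((1 + ‖ζ‖)/2) with hrm_def
    have h0rm : 0 ≤ rm := le_trans h0r (le_max_left _ _)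
    have hrm1 : rm < 1 := max_lt hr1 (hrprop ζ h).2.1
    have hζrm : ‖ζ‖ ≤ rm := hζr.trans (le_max_left _ _)
    have := hUfwd rm h0rm hrm1 ζ hζrm w₁ w₂ hw₁s hw₂s hw₁p hw₂p t (right_mem_Icc.mpr hst)
    rw [← hw₁t, ← hw₂t]
    exact this
  refine ⟨φ, ?_, ?_, ?_, ?_⟩
  · -- differentiability
    intro ζ₀ hζ₀
    have h0 : ‖ζ₀‖ < 1 := mem_ball_zero_iff.mp hζ₀
    set r : ℝ := (1 + ‖ζ₀‖)/2 with hr_def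
    obtain ⟨h0r, hr1, hζr⟩ := hrprop ζ₀ h0
    have hζ₀r : ζ₀ ∈ ball (0:ℂ) r := by
      rw [mem_ball_zero_iff]
      rw [hr_def]
      linarith
    have hdiff : DifferentiableAt ℂ (Ψf r) ζ₀ :=
      ((hΨf r ⟨h0r, hr1⟩).1).differentiableAt (isOpen_ball.mem_nhds hζ₀r)
    have hev : φ =ᶠ[𝓝 ζ₀] Ψf r := by
      filter_upwards [isOpen_ball.mem_nhds hζ₀r] with ζ hζ
      have hζ1 : ‖ζ‖ < 1 := lt_trans (mem_ball_zero_iff.mp hζ) hr1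
      exact (hcons ζ hζ1 r h0r hr1 (mem_ball_zero_iff.mp hζ).le).symm
    exact (hdiff.congr_of_eventuallyEq hev).differentiableWithinAt
  · -- maps to the ball
    intro ζ hζ
    rw [mem_ball_zero_iff]
    exact lt_of_le_of_lt (hsolφ ζ (mem_ball_zero_iff.mp hζ)).1 (mem_ball_zero_iff.mp hζ)
  · -- injectivity
    intro ζ₁ h₁ ζ₂ h₂ heq
    have h₁' : ‖ζ₁‖ < 1 := mem_ball_zero_iff.mp h₁
    have h₂' : ‖ζ₂‖ < 1 := mem_ball_zero_iff.mp h₂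
    obtain ⟨w₁, hw₁s, hw₁t, hw₁p⟩ := (hsolφ ζ₁ h₁').2
    obtain ⟨w₂, hw₂s, hw₂t, hw₂p⟩ := (hsolφ ζ₂ h₂').2
    set rm : ℝ := max ‖ζ₁‖ ‖ζ₂‖ with hrm_def
    have h0rm : 0 ≤ rm := le_trans (norm_nonneg _) (le_max_left _ _)
    have hrm1 : rm < 1 := max_lt h₁' h₂'
    refine hUbwd rm h0rm hrm1 ζ₁ ζ₂ (le_max_left _ _) (le_max_right _ _)
      w₁ w₂ hw₁s hw₂s hw₁p hw₂p ?_
    rw [hw₁t, hw₂t, heq]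
  · -- the subordination identity
    intro ζ hζ
    have h0 : ‖ζ‖ < 1 := mem_ball_zero_iff.mp hζ
    obtain ⟨w, hws, hwt, hwp⟩ := (hsolφ ζ h0).2
    have hw_cont : ContinuousOn w (Icc s t) := fun τ hτ =>
      ((hwp τ hτ).2).continuousWithinAt
    have hw_mem : ∀ τ ∈ Icc s t, w τ ∈ ball (0:ℂ) 1 := fun τ hτ =>
      mem_ball_zero_iff.mpr (lt_of_le_of_lt ((hwp τ hτ).1) h0)
    have hw_deriv : ∀ τ ∈ Ioo s t, HasDerivAt w (-(w τ) * P (w τ) τ) τ := by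
      intro τ hτ
      exact ((hwp τ (Ioo_subset_Icc_self hτ)).2).hasDerivAt
        (Icc_mem_nhds hτ.1 hτ.2)
    have := f_const_along hI hU hUD hsmooth hanal hLK hs ht hst hw_cont hw_mem hw_deriv
    rw [hws, hwt] at this
    exact this
end
end

section
/- Fix real numbers b and t with t > 1, and let f(ζ) = b·ζ·(ζ − 2/t + 1/t³)/(ζ − t). Then the quadrature identity (1/π)·∫_𝔻 h(ζ)·|f'(ζ)|² dm(ζ) = b²·(2t² − 1)/t⁴ · h(0) holds for every function h analytic in a neighborhood of the closed unit disk. -/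
open Complex Metric Set MeasureTheory
open scoped Real

noncomputable section


lemma deriv_f_eq (b t : ℝ) (ht : 1 < t) (z : ℂ) (hz : z ≠ (t:ℂ)) :
    deriv (fun ζ : ℂ => (b:ℂ) * ζ * (ζ - 2/(t:ℂ) + 1/(t:ℂ)^3) / (ζ - (t:ℂ))) z
      = (b:ℂ) * (1 - (((t^2-1)^2/t^2 : ℝ):ℂ) / (z - (t:ℂ))^2) := by
  have ht0 : (0:ℝ) < t := by linarith
  have htC : (t:ℂ) ≠ 0 := by exact_mod_cast ht0.ne'
  have hzt : z - (t:ℂ) ≠ 0 := sub_ne_zero.mpr hz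
  have h1 : HasDerivAt (fun ζ:ℂ => (b:ℂ) * ζ * (ζ - 2/(t:ℂ) + 1/(t:ℂ)^3))
      ((b:ℂ) * (z - 2/(t:ℂ) + 1/(t:ℂ)^3) + (b:ℂ) * z * 1) z := by
    have ha : HasDerivAt (fun ζ:ℂ => (b:ℂ) * ζ) (b:ℂ) z := by
      simpa using (hasDerivAt_id z).const_mul (b:ℂ)
    have hb : HasDerivAt (fun ζ:ℂ => ζ - 2/(t:ℂ) + 1/(t:ℂ)^3) 1 z := by
      exact ((hasDerivAt_id z).sub_const (2/(t:ℂ))).add_const (1/(t:ℂ)^3)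
    exact ha.mul hb
  have h2 : HasDerivAt (fun ζ:ℂ => ζ - (t:ℂ)) 1 z := (hasDerivAt_id z).sub_const _
  have h3 := h1.div h2 hzt
  rw [show (fun ζ : ℂ => (b:ℂ) * ζ * (ζ - 2/(t:ℂ) + 1/(t:ℂ)^3) / (ζ - (t:ℂ))) = ((fun ζ:ℂ => (b:ℂ) * ζ * (ζ - 2/(t:ℂ) + 1/(t:ℂ)^3)) / fun ζ => ζ - (t:ℂ)) from rfl, h3.deriv]
  push_cast
  field_simp
  ring


lemma ball_integral_polar (g : ℂ → ℂ) :
    (∫ z in ball (0:ℂ) 1, g z)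
      = ∫ p in Ioo (0:ℝ) 1 ×ˢ Ioo (-π) π, p.1 • g (Complex.polarCoord.symm p) := by
  have hcont : Continuous (fun p : ℝ × ℝ => Complex.polarCoord.symm p) := by
    simp only [Complex.polarCoord_symm_apply]
    fun_prop
  have hmeas : MeasurableSet (Complex.polarCoord.symm ⁻¹' ball (0:ℂ) 1) :=
    hcont.measurable measurableSet_ball
  have hset : polarCoord.target ∩ Complex.polarCoord.symm ⁻¹' ball (0:ℂ) 1
      = Ioo (0:ℝ) 1 ×ˢ Ioo (-π) π := by
    rw [polarCoord_target]
    ext ⟨r, θ⟩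
    simp only [Set.mem_inter_iff, Set.mem_prod, Set.mem_Ioi, Set.mem_Ioo, Set.mem_preimage,
      mem_ball_zero_iff, Complex.norm_polarCoord_symm]
    constructor
    · rintro ⟨⟨hr, hθ⟩, habs⟩
      exact ⟨⟨hr, by rwa [abs_of_pos hr] at habs⟩, hθ⟩
    · rintro ⟨⟨hr, hr1⟩, hθ⟩
      exact ⟨⟨hr, hθ⟩, by rwa [abs_of_pos hr]⟩
  rw [← integral_indicator measurableSet_ball,
    ← Complex.integral_comp_polarCoord_symm (Set.indicator (ball 0 1) g)]
  have h1 : ∀ p : ℝ × ℝ, p.1 • (ball (0:ℂ) 1).indicator g (Complex.polarCoord.symm p)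
      = (Complex.polarCoord.symm ⁻¹' ball (0:ℂ) 1).indicator
          (fun q : ℝ × ℝ => q.1 • g (Complex.polarCoord.symm q)) p := by
    intro p
    by_cases hp : Complex.polarCoord.symm p ∈ ball (0:ℂ) 1
    · simp [Set.indicator, hp]
    · simp [Set.indicator, hp]
  simp_rw [h1]
  rw [setIntegral_indicator hmeas, hset]


lemma inner_circle (t : ℝ) (ht : 1 < t) (c : ℂ) (W : Set ℂ) (hW : IsOpen W)
    (hWb : closedBall (0:ℂ) 1 ⊆ W) (u : ℂ → ℂ) (hu : DifferentiableOn ℂ u W)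
    (r : ℝ) (hr0 : 0 < r) (hr1 : r < 1) :
    (∫ θ in Ioo (-π) π, u (circleMap 0 r θ) *
        (1 - c / ((starRingEnd ℂ) (circleMap 0 r θ) - (t:ℂ))^2))
      = (2*π:ℂ) * (u 0 - c / (t:ℂ)^2 * deriv (fun z => z * u z) ((r:ℂ)^2/(t:ℂ))) := by
  have ht0 : (0:ℝ) < t := by linarith
  have htC : (t:ℂ) ≠ 0 := by exact_mod_cast ht0.ne'
  set T : ℂ := (t:ℂ) with hT
  set w : ℂ := (r:ℂ)^2 / T with hw
  set q : ℂ := deriv (fun z => z * u z) w with hq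
  have hrC : (r:ℂ) ≠ 0 := by exact_mod_cast hr0.ne'
  have hcb : closedBall (0:ℂ) r ⊆ W :=
    (closedBall_subset_closedBall hr1.le).trans hWb
  -- basic facts about w
  have hwabs : ‖w‖ = r^2 / t := by
    rw [hw, norm_div, norm_pow]
    simp [Complex.norm_of_nonneg hr0.le, Complex.norm_of_nonneg ht0.le, hT, abs_of_pos ht0]
  have hwball : w ∈ ball (0:ℂ) r := by
    rw [mem_ball_zero_iff, hwabs, div_lt_iff₀ ht0]
    nlinarith
  -- the rational modification on the circle of radius r
  set Gr : ℂ → ℂ := fun z => u z * (1 - c * z^2 / ((r:ℂ)^2 - T*z)^2) with hGr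
  -- pointwise equality on the circle
  have hptwise : ∀ θ : ℝ, u (circleMap 0 r θ) *
      (1 - c / ((starRingEnd ℂ) (circleMap 0 r θ) - T)^2) = Gr (circleMap 0 r θ) := by
    intro θ
    set z : ℂ := circleMap 0 r θ with hz
    have hz0 : z ≠ 0 := circleMap_ne_center hr0.ne'
    have habs : ‖z‖ = r := by
      rw [hz, norm_circleMap_zero, abs_of_pos hr0]
    have hconj : (starRingEnd ℂ) z = (r:ℂ)^2 / z := by
      rw [eq_div_iff hz0]
      have := Complex.mul_conj z
      rw [mul_comm] at this
      rw [this, Complex.normSq_eq_norm_sq, habs]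
      push_cast
      ring
    have hden : (r:ℂ)^2 - T*z ≠ 0 := by
      intro hcontra
      have : ‖(r:ℂ)^2‖ = ‖T*z‖ := by
        rw [sub_eq_zero] at hcontra; rw [hcontra]
      rw [norm_pow, norm_mul, habs] at this
      simp only [Complex.norm_of_nonneg hr0.le, Complex.norm_of_nonneg ht0.le, hT] at this
      nlinarith
    rw [hconj, hGr]
    have h2 : ((r:ℂ)^2/z - T) = ((r:ℂ)^2 - T*z)/z := by field_simp
    rw [h2, div_pow, div_div_eq_mul_div]
  simp_rw [hptwise]
  -- convert to interval integral over [0, 2π]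
  rw [← MeasureTheory.integral_Ioc_eq_integral_Ioo,
    ← intervalIntegral.integral_of_le (by linarith [Real.pi_pos] : -π ≤ π)]
  have hper : Function.Periodic (fun θ => Gr (circleMap 0 r θ)) (2*π) :=
    (periodic_circleMap 0 r).comp Gr
  have hshift := hper.intervalIntegral_add_eq (-π) 0
  have he1 : -π + 2*π = π := by ring
  rw [he1, zero_add] at hshift
  rw [hshift]
  -- continuity facts
  have hsphW : sphere (0:ℂ) r ⊆ W := sphere_subset_closedBall.trans hcb
  have hucont : ContinuousOn u (sphere (0:ℂ) r) := hu.continuousOn.mono hsphW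
  have hz0' : ∀ z ∈ sphere (0:ℂ) r, z ≠ 0 := by
    intro z hz h0
    rw [mem_sphere_zero_iff_norm, h0] at hz
    simp at hz
    linarith
  have hzw' : ∀ z ∈ sphere (0:ℂ) r, z - w ≠ 0 := by
    intro z hz h0
    rw [mem_sphere_zero_iff_norm] at hz
    rw [sub_eq_zero] at h0
    rw [h0, hwabs] at hz
    have h2 : r^2 = r * t := by
      rw [div_eq_iff ht0.ne'] at hz
      linarith
    nlinarith
  have hden' : ∀ z ∈ sphere (0:ℂ) r, (r:ℂ)^2 - T*z ≠ 0 := by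
    intro z hz hcontra
    rw [mem_sphere_zero_iff_norm] at hz
    have : ‖(r:ℂ)^2‖ = ‖T*z‖ := by
      rw [sub_eq_zero] at hcontra; rw [hcontra]
    rw [norm_pow, norm_mul] at this
    simp only [Complex.norm_of_nonneg hr0.le, Complex.norm_of_nonneg ht0.le, hT, hz] at this
    nlinarith
  -- circle integrability
  have hAc : ContinuousOn (fun z : ℂ => (z - 0)⁻¹ • u z) (sphere (0:ℂ) r) := by
    refine ContinuousOn.smul (ContinuousOn.inv₀ (f := fun z : ℂ => z - 0) (by fun_prop) ?_) hucont
    intro z hz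
    simpa using hz0' z hz
  have hBc : ContinuousOn (fun z : ℂ => (c/T^2) • (((z - w)^2)⁻¹ • (z * u z)))
      (sphere (0:ℂ) r) := by
    refine continuousOn_const.fun_smul (ContinuousOn.fun_smul (ContinuousOn.inv₀ (f := fun z : ℂ => (z - w)^2) (by fun_prop) ?_)
      (continuousOn_id.fun_mul hucont))
    intro z hz
    exact pow_ne_zero _ (hzw' z hz)
  have hAint : CircleIntegrable (fun z : ℂ => (z - 0)⁻¹ • u z) 0 r :=
    hAc.circleIntegrable hr0.le
  have hBint : CircleIntegrable (fun z : ℂ => (c/T^2) • (((z - w)^2)⁻¹ • (z * u z))) 0 r :=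
    hBc.circleIntegrable hr0.le
  -- pointwise splitting on the sphere
  have hEq : EqOn (fun z : ℂ => z⁻¹ * Gr z)
      (fun z : ℂ => (z - 0)⁻¹ • u z - (c/T^2) • (((z - w)^2)⁻¹ • (z * u z)))
      (sphere (0:ℂ) r) := by
    intro z hz
    have h0 := hz0' z hz
    have h1 := hzw' z hz
    have h2 := hden' z hz
    simp only [smul_eq_mul, sub_zero, hGr]
    rw [hw] at h1 ⊢
    have hD : T*z - (r:ℂ)^2 ≠ 0 := fun hcon => h2 (by linear_combination -hcon)
    have hrw : (z - (r:ℂ)^2/T) = (T*z - (r:ℂ)^2)/T := by field_simp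
    rw [hrw]
    field_simp
    try ring
  -- Cauchy formulas
  have hcirc1 : (∮ z in C(0, r), (z - 0)⁻¹ • u z) = (2*π*Complex.I : ℂ) • u 0 :=
    (hu.mono hcb).circleIntegral_sub_inv_smul (mem_ball_self hr0)
  have hm : DifferentiableOn ℂ (fun z => z * u z) W :=
    (differentiable_id.differentiableOn).mul hu
  have h2πI : (2*π*Complex.I : ℂ) ≠ 0 := by
    simp [Real.pi_ne_zero, Complex.I_ne_zero, Complex.ofReal_ne_zero]
  have hcirc2 : (∮ z in C(0, r), ((z - w)^2)⁻¹ • (z * u z)) = (2*π*Complex.I : ℂ) • q := by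
    have h := two_pi_I_inv_smul_circleIntegral_sub_sq_inv_smul_of_differentiable hW hcb hm hwball
    rw [inv_smul_eq_iff₀ h2πI] at h
    rw [h, hq]
  have hsplit : (∮ z in C(0, r), z⁻¹ * Gr z)
      = (2*π*Complex.I:ℂ) • u 0 - (c/T^2) • ((2*π*Complex.I:ℂ) • q) := by
    rw [circleIntegral.integral_congr hr0.le hEq,
      circleIntegral.integral_sub hAint hBint, circleIntegral.integral_smul, hcirc1, hcirc2]
  have hunfold : (∮ z in C(0, r), z⁻¹ * Gr z)
      = Complex.I * ∫ θ in (0:ℝ)..2*π, Gr (circleMap 0 r θ) := by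
    rw [circleIntegral, ← intervalIntegral.integral_const_mul]
    apply intervalIntegral.integral_congr
    intro θ _
    have hz0 : circleMap 0 r θ ≠ 0 := circleMap_ne_center hr0.ne'
    simp only [deriv_circleMap, smul_eq_mul]
    field_simp
  have hkey : Complex.I * (∫ θ in (0:ℝ)..2*π, Gr (circleMap 0 r θ))
      = Complex.I * ((2*π:ℂ) * (u 0 - c/T^2 * q)) := by
    rw [← hunfold, hsplit]
    simp only [smul_eq_mul]
    push_cast
    ring
  exact mul_left_cancel₀ Complex.I_ne_zero hkey

lemma area_quadrature (t : ℝ) (ht : 1 < t) (c : ℂ) (W : Set ℂ) (hW : IsOpen W)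
    (hWb : closedBall (0:ℂ) 1 ⊆ W) (u : ℂ → ℂ) (hu : DifferentiableOn ℂ u W) :
    (∫ z in ball (0:ℂ) 1, u z * (1 - c / ((starRingEnd ℂ) z - (t:ℂ))^2))
      = (π:ℂ) * u 0 - (π:ℂ) * (c / (t:ℂ)^2) * u (((t:ℂ))⁻¹) := by
  have ht0 : (0:ℝ) < t := by linarith
  have htC : (t:ℂ) ≠ 0 := by exact_mod_cast ht0.ne'
  set G : ℂ → ℂ := fun z => u z * (1 - c / ((starRingEnd ℂ) z - (t:ℂ))^2) with hGdef
  have hsymm_cont : Continuous (fun p : ℝ × ℝ => Complex.polarCoord.symm p) := by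
    simp only [Complex.polarCoord_symm_apply]
    fun_prop
  -- continuity of G on the closed ball
  have hGc : ContinuousOn G (closedBall (0:ℂ) 1) := by
    apply ContinuousOn.mul (hu.continuousOn.mono hWb)
    apply continuousOn_const.sub
    apply ContinuousOn.div continuousOn_const
      ((((RCLike.continuous_conj (K := ℂ)).sub continuous_const).pow 2).continuousOn)
    intro z hz
    apply pow_ne_zero
    intro hcon
    rw [Pi.sub_apply, sub_eq_zero] at hcon
    have h1 : ‖(starRingEnd ℂ) z‖ = ‖z‖ := Complex.norm_conj z
    rw [hcon] at h1
    rw [mem_closedBall_zero_iff] at hz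
    simp only [Complex.norm_of_nonneg ht0.le] at h1
    linarith [h1 ▸ hz]
  -- integrability on the rectangle
  have hmapsTo : MapsTo (fun p : ℝ × ℝ => Complex.polarCoord.symm p)
      (Icc (0:ℝ) 1 ×ˢ Icc (-π) π) (closedBall (0:ℂ) 1) := by
    intro p hp
    rw [mem_closedBall_zero_iff, Complex.norm_polarCoord_symm]
    rw [_root_.abs_of_nonneg hp.1.1]
    exact hp.1.2
  have hFc : ContinuousOn (fun p : ℝ × ℝ => p.1 • G (Complex.polarCoord.symm p))
      (Icc (0:ℝ) 1 ×ˢ Icc (-π) π) :=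
    (continuous_fst.continuousOn).smul (hGc.comp hsymm_cont.continuousOn hmapsTo)
  have hFi : IntegrableOn (fun p : ℝ × ℝ => p.1 • G (Complex.polarCoord.symm p))
      (Ioo (0:ℝ) 1 ×ˢ Ioo (-π) π) := by
    apply (hFc.integrableOn_compact (isCompact_Icc.prod isCompact_Icc)).mono_set
    exact Set.prod_mono Ioo_subset_Icc_self Ioo_subset_Icc_self
  rw [ball_integral_polar G]
  rw [MeasureTheory.Measure.volume_eq_prod] at hFi ⊢
  rw [setIntegral_prod _ hFi]
  -- the inner integral
  have hinner : ∀ r ∈ Ioo (0:ℝ) 1,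
      (∫ θ in Ioo (-π) π, (fun p : ℝ × ℝ => p.1 • G (Complex.polarCoord.symm p)) (r, θ))
      = (r:ℝ) • ((2*π:ℂ) * (u 0 - c/(t:ℂ)^2 * deriv (fun z => z * u z) ((r:ℂ)^2/(t:ℂ)))) := by
    intro r hr
    have hsymm : ∀ θ : ℝ, Complex.polarCoord.symm (r, θ) = circleMap 0 r θ := by
      intro θ
      simp [circleMap, Complex.exp_mul_I, ← Complex.ofReal_cos, ← Complex.ofReal_sin]
    simp only [hsymm]
    rw [MeasureTheory.integral_smul]
    rw [hGdef]
    rw [inner_circle t ht c W hW hWb u hu r hr.1 hr.2]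
  rw [setIntegral_congr_fun measurableSet_Ioo hinner]
  rw [← MeasureTheory.integral_Ioc_eq_integral_Ioo,
    ← intervalIntegral.integral_of_le (zero_le_one : (0:ℝ) ≤ 1)]
  -- FTC
  set m : ℂ → ℂ := fun z => z * u z with hm
  have hmW : DifferentiableOn ℂ m W := differentiable_id.differentiableOn.mul hu
  have harg : ∀ r : ℝ, r ∈ Icc (0:ℝ) 1 → (r:ℂ)^2/(t:ℂ) ∈ W := by
    intro r hr
    apply hWb
    rw [mem_closedBall_zero_iff, norm_div, norm_pow]
    rw [Complex.norm_of_nonneg hr.1, Complex.norm_of_nonneg ht0.le]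
    rw [div_le_one ht0]
    nlinarith [hr.1, hr.2]
  have hderiv : ∀ r ∈ uIcc (0:ℝ) 1, HasDerivAt
      (fun r : ℝ => (π:ℂ) * (r:ℂ)^2 * u 0 - (π:ℂ)*c/(t:ℂ) * ((r:ℂ)^2/(t:ℂ) * u ((r:ℂ)^2/(t:ℂ))))
      ((r:ℝ) • ((2*π:ℂ) * (u 0 - c/(t:ℂ)^2 * deriv m ((r:ℂ)^2/(t:ℂ))))) r := by
    intro r hr
    rw [Set.uIcc_of_le (zero_le_one : (0:ℝ) ≤ 1)] at hr
    have hw : (r:ℂ)^2/(t:ℂ) ∈ W := harg r hr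
    have huw : DifferentiableAt ℂ u ((r:ℂ)^2/(t:ℂ)) :=
      (hu.differentiableAt (hW.mem_nhds hw))
    have hmw : HasDerivAt m (deriv m ((r:ℂ)^2/(t:ℂ))) ((r:ℂ)^2/(t:ℂ)) :=
      (differentiableAt_id.mul huw).hasDerivAt
    have hη : HasDerivAt (fun z : ℂ => z^2/(t:ℂ)) (2*(r:ℂ)/(t:ℂ)) (r:ℂ) := by
      simpa using (hasDerivAt_pow 2 (r:ℂ)).div_const (t:ℂ)
    have hcomp : HasDerivAt (fun z : ℂ => m (z^2/(t:ℂ)))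
        (deriv m ((r:ℂ)^2/(t:ℂ)) * (2*(r:ℂ)/(t:ℂ))) (r:ℂ) := HasDerivAt.comp (h₂ := m) (r:ℂ) hmw hη
    have hpart1 : HasDerivAt (fun z : ℂ => (π:ℂ) * z^2 * u 0) ((π:ℂ) * (2*(r:ℂ)^1) * u 0) (r:ℂ) :=
      ((hasDerivAt_pow 2 (r:ℂ)).const_mul (π:ℂ)).mul_const (u 0)
    have hΨ : HasDerivAt (fun z : ℂ => (π:ℂ) * z^2 * u 0 - (π:ℂ)*c/(t:ℂ) * m (z^2/(t:ℂ)))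
        ((π:ℂ) * (2*(r:ℂ)^1) * u 0
          - (π:ℂ)*c/(t:ℂ) * (deriv m ((r:ℂ)^2/(t:ℂ)) * (2*(r:ℂ)/(t:ℂ)))) (r:ℂ) :=
      hpart1.sub (hcomp.const_mul ((π:ℂ)*c/(t:ℂ)))
    have := hΨ.comp_ofReal
    convert this using 1
    rw [Complex.real_smul]
    push_cast
    field_simp
  have hcont_q : ContinuousOn (fun r : ℝ =>
      (r:ℝ) • ((2*π:ℂ) * (u 0 - c/(t:ℂ)^2 * deriv m ((r:ℂ)^2/(t:ℂ))))) (Icc (0:ℝ) 1) := by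
    have hqW : ContinuousOn (deriv m) W :=
      ((hmW.analyticOnNhd hW).deriv).differentiableOn.continuousOn
    have hargc : ContinuousOn (fun r : ℝ => (r:ℂ)^2/(t:ℂ)) (Icc (0:ℝ) 1) := by fun_prop
    have : ContinuousOn (fun r : ℝ => deriv m ((r:ℂ)^2/(t:ℂ))) (Icc (0:ℝ) 1) :=
      hqW.comp hargc harg
    apply ContinuousOn.smul continuous_id.continuousOn
    exact continuousOn_const.mul (continuousOn_const.sub (continuousOn_const.mul this))
  have hint : IntervalIntegrable (fun r : ℝ =>
      (r:ℝ) • ((2*π:ℂ) * (u 0 - c/(t:ℂ)^2 * deriv m ((r:ℂ)^2/(t:ℂ))))) volume 0 1 := by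
    apply ContinuousOn.intervalIntegrable
    rwa [Set.uIcc_of_le (zero_le_one : (0:ℝ) ≤ 1)]
  rw [intervalIntegral.integral_eq_sub_of_hasDerivAt hderiv hint]
  have h1 : ((1:ℝ):ℂ)^2/(t:ℂ) = ((t:ℂ))⁻¹ := by norm_num [one_div]
  have h0 : ((0:ℝ):ℂ)^2/(t:ℂ) = 0 := by norm_num
  simp only [h1, h0]
  push_cast
  field_simp
  ring

/-- For real `b` and `t > 1`, the map
`f(ζ) = b ζ (ζ − 2/t + 1/t³)/(ζ − t)` satisfies the quadrature identity
`(1/π) ∫_𝔻 h |f'|² dm = b² (2t² − 1)/t⁴ · h(0)` for every `h` analytic in a neighborhood of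
the closed unit disk. -/
theorem quadrature_identity_sakai_example
    (b t : ℝ) (ht : 1 < t)
    (f : ℂ → ℂ)
    (hf : f = fun ζ : ℂ =>
      (b : ℂ) * ζ * (ζ - 2 / (t : ℂ) + 1 / (t : ℂ) ^ 3) / (ζ - (t : ℂ))) :
    ∀ (V : Set ℂ), IsOpen V → closedBall (0 : ℂ) 1 ⊆ V →
      ∀ h : ℂ → ℂ, DifferentiableOn ℂ h V →
        ((1 / π : ℝ) : ℂ) *
            (∫ ζ in ball (0 : ℂ) 1, h ζ * ((‖deriv f ζ‖ ^ 2 : ℝ) : ℂ)) =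
          ((b ^ 2 * (2 * t ^ 2 - 1) / t ^ 4 : ℝ) : ℂ) * h 0 := by
  intro V hV hVb h hh
  have ht0 : (0:ℝ) < t := by linarith
  have htC : (t:ℂ) ≠ 0 := by exact_mod_cast ht0.ne'
  set c : ℂ := (((t^2-1)^2/t^2 : ℝ) : ℂ) with hc
  set W : Set ℂ := V ∩ ball (0:ℂ) t with hWdef
  have hW : IsOpen W := hV.inter isOpen_ball
  have hWb : closedBall (0:ℂ) 1 ⊆ W := by
    refine subset_inter hVb (fun z hz => ?_)
    rw [mem_closedBall_zero_iff] at hz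
    rw [mem_ball_zero_iff]
    linarith
  have hWt : ∀ z ∈ W, z ≠ (t:ℂ) := by
    intro z hz hcon
    have h2 := hz.2
    rw [mem_ball_zero_iff, hcon, Complex.norm_of_nonneg ht0.le] at h2
    exact lt_irrefl t h2
  set u : ℂ → ℂ := fun z => h z * (1 - c / (z - (t:ℂ))^2) with hu_def
  have hu : DifferentiableOn ℂ u W := by
    apply DifferentiableOn.mul (hh.mono inter_subset_left)
    apply DifferentiableOn.sub (differentiableOn_const _)
    apply DifferentiableOn.div (differentiableOn_const _)
    · exact ((differentiable_id.sub_const _).pow 2).differentiableOn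
    · intro z hz
      exact pow_ne_zero _ (sub_ne_zero.mpr (hWt z hz))
  have hcongr : EqOn (fun ζ => h ζ * ((‖deriv f ζ‖ ^ 2 : ℝ) : ℂ))
      (fun ζ => ((b:ℂ)^2) * (u ζ * (1 - c / ((starRingEnd ℂ) ζ - (t:ℂ))^2)))
      (ball (0:ℂ) 1) := by
    intro z hz
    have hzt : z ≠ (t:ℂ) := by
      rw [mem_ball_zero_iff] at hz
      intro hcon
      rw [hcon, Complex.norm_of_nonneg ht0.le] at hz
      linarith
    have hd : deriv f z = (b:ℂ) * (1 - c/(z - (t:ℂ))^2) := by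
      rw [hf, hc]
      exact deriv_f_eq b t ht z hzt
    simp only
    rw [hd]
    have habs : ∀ zz : ℂ, ((‖zz‖ ^ 2 : ℝ) : ℂ) = zz * (starRingEnd ℂ) zz := by
      intro zz
      rw [Complex.sq_norm]
      exact (Complex.mul_conj _).symm
    rw [habs]
    have hconj : (starRingEnd ℂ) ((b:ℂ) * (1 - c/(z - (t:ℂ))^2))
        = (b:ℂ) * (1 - c/((starRingEnd ℂ) z - (t:ℂ))^2) := by
      rw [hc]
      simp only [map_mul, map_sub, map_one, map_div₀, map_pow, Complex.conj_ofReal]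
    rw [hconj, hu_def]
    ring
  rw [setIntegral_congr_fun measurableSet_ball hcongr, integral_const_mul,
    area_quadrature t ht c W hW hWb u hu]
  have hut : u (((t:ℂ))⁻¹) = 0 := by
    rw [hu_def]
    simp only
    have hden : ((t:ℂ)⁻¹ - (t:ℂ))^2 = c := by
      rw [hc]
      push_cast
      field_simp
      ring
    have hcne : c ≠ 0 := by
      rw [hc]
      apply Complex.ofReal_ne_zero.mpr
      have h1 : t^2 - 1 > 0 := by nlinarith
      positivity
    rw [hden, div_self hcne]
    ring
  rw [hut, hu_def]
  simp only
  rw [hc]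
  have hpi : ((π:ℝ):ℂ) ≠ 0 := Complex.ofReal_ne_zero.mpr Real.pi_ne_zero
  push_cast
  field_simp
  ring
end
end

section
/- Fix a real number a, and for t > 1 and ζ ≠ t let f(ζ,t) = a·t³·ζ·(ζ − 2/t + 1/t³)/(ζ − t). Then the derivative factors as ∂_ζf(ζ,t) = a·t³·(ζ − 1/t)·(ζ − 2t + 1/t)/(ζ − t)²; in particular ∂_ζf(1/t, t) = 0, and the corresponding critical value is independent of t: f(1/t, t) = a for all t > 1. -/
open Complex

noncomputable section

/-- For real `a`, `t > 1` and
`f(ζ) = a t³ ζ (ζ − 2/t + 1/t³)/(ζ − t)`, the derivative factors as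
`f'(ζ) = a t³ (ζ − 1/t)(ζ − 2t + 1/t)/(ζ − t)²`; in particular `f'(1/t) = 0` and the critical
value is the fixed point `f(1/t) = a`. -/
theorem sakai_example_critical_point
    (a t : ℝ) (ht : 1 < t)
    (f : ℂ → ℂ)
    (hf : f = fun ζ : ℂ =>
      (a : ℂ) * (t : ℂ) ^ 3 * ζ * (ζ - 2 / (t : ℂ) + 1 / (t : ℂ) ^ 3) / (ζ - (t : ℂ))) :
    (∀ ζ : ℂ, ζ ≠ (t : ℂ) →
      deriv f ζ =
        (a : ℂ) * (t : ℂ) ^ 3 * (ζ - 1 / (t : ℂ)) * (ζ - 2 * (t : ℂ) + 1 / (t : ℂ)) /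
          (ζ - (t : ℂ)) ^ 2) ∧
    deriv f (1 / (t : ℂ)) = 0 ∧
    f (1 / (t : ℂ)) = (a : ℂ) := by
  have ht0 : (0 : ℝ) < t := lt_trans one_pos ht
  have htc : (t : ℂ) ≠ 0 := by exact_mod_cast ht0.ne'
  have ht2 : (t : ℂ) ^ 2 ≠ 1 := by
    intro h
    have : (t : ℝ) ^ 2 = 1 := by exact_mod_cast h
    nlinarith
  have hinv : (1 : ℂ) / (t : ℂ) ≠ (t : ℂ) := by
    intro h
    apply ht2
    field_simp at h
    linear_combination -h
  have hmain : ∀ ζ : ℂ, ζ ≠ (t : ℂ) →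
      deriv f ζ =
        (a : ℂ) * (t : ℂ) ^ 3 * (ζ - 1 / (t : ℂ)) * (ζ - 2 * (t : ℂ) + 1 / (t : ℂ)) /
          (ζ - (t : ℂ)) ^ 2 := by
    intro ζ hζ
    have hne : ζ - (t : ℂ) ≠ 0 := sub_ne_zero.mpr hζ
    have hN : HasDerivAt (fun ζ : ℂ => (a : ℂ) * (t : ℂ) ^ 3 * ζ *
        (ζ - 2 / (t : ℂ) + 1 / (t : ℂ) ^ 3))
        ((a : ℂ) * (t : ℂ) ^ 3 * (ζ - 2 / (t : ℂ) + 1 / (t : ℂ) ^ 3)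
          + (a : ℂ) * (t : ℂ) ^ 3 * ζ) ζ := by
      have h1 : HasDerivAt (fun ζ : ℂ => (a : ℂ) * (t : ℂ) ^ 3 * ζ)
          ((a : ℂ) * (t : ℂ) ^ 3) ζ := by
        simpa using (hasDerivAt_id ζ).const_mul ((a : ℂ) * (t : ℂ) ^ 3)
      have h2 : HasDerivAt (fun ζ : ℂ => ζ - 2 / (t : ℂ) + 1 / (t : ℂ) ^ 3) 1 ζ :=
        ((hasDerivAt_id ζ).sub_const (2 / (t : ℂ))).add_const (1 / (t : ℂ) ^ 3)
      simpa [mul_comm, mul_assoc, mul_left_comm] using h1.fun_mul h2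
    have hD : HasDerivAt (fun ζ : ℂ => ζ - (t : ℂ)) 1 ζ :=
      (hasDerivAt_id ζ).sub_const _
    have h := (hN.fun_div hD hne).deriv
    rw [hf, h]
    field_simp
    ring
  refine ⟨hmain, ?_, ?_⟩
  · rw [hmain _ hinv]
    simp
  · rw [hf]
    have hne : (1 : ℂ) / (t : ℂ) - (t : ℂ) ≠ 0 := sub_ne_zero.mpr hinv
    have h57 : (t : ℂ) ^ 5 - (t : ℂ) ^ 7 ≠ 0 := by
      have h5 : (t : ℂ) ^ 5 ≠ 0 := pow_ne_zero _ htc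
      intro h
      apply ht2
      apply mul_left_cancel₀ h5
      simp only [mul_one]
      linear_combination -h
    show (a : ℂ) * (t : ℂ) ^ 3 * (1 / (t : ℂ)) *
        (1 / (t : ℂ) - 2 / (t : ℂ) + 1 / (t : ℂ) ^ 3) / (1 / (t : ℂ) - (t : ℂ)) = (a : ℂ)
    rw [div_eq_iff hne]
    field_simp
    ring
end
end

section
/- For t ≥ 0 and ζ ∈ ℂ let f(ζ,t) = e^t·ζ − (1/2)·e^{−2t}·ζ². Then f solves the Polubarinova–Galin equation with source strength q(t) = e^{2t} − e^{−4t}: for every t ≥ 0 and every ζ with |ζ| = 1, Re[∂_tf(ζ,t)·conj(ζ·∂_ζf(ζ,t))] = e^{2t} − e^{−4t}. -/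
open Complex

noncomputable section

lemma deriv_t_aux (ζ : ℂ) (t : ℝ) :
    HasDerivAt (fun t : ℝ => (Real.exp t : ℂ) * ζ - (1 / 2 : ℂ) * (Real.exp (-2 * t) : ℂ) * ζ ^ 2)
      ((Real.exp t : ℂ) * ζ + (Real.exp (-2 * t) : ℂ) * ζ ^ 2) t := by
  have h1 : HasDerivAt (fun t : ℝ => ((Real.exp t : ℝ) : ℂ)) ((Real.exp t : ℂ)) t :=
    (Real.hasDerivAt_exp t).ofReal_comp
  have h2 : HasDerivAt (fun t : ℝ => ((Real.exp (-2 * t) : ℝ) : ℂ))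
      ((-2 * Real.exp (-2 * t) : ℝ) : ℂ) t := by
    have hin : HasDerivAt (fun y : ℝ => -2 * y) (-2 : ℝ) t := by
      simpa using (hasDerivAt_id t).const_mul (-2 : ℝ)
    have : HasDerivAt (fun t : ℝ => Real.exp (-2 * t)) (Real.exp (-2 * t) * -2) t :=
      (Real.hasDerivAt_exp (-2 * t)).comp t hin
    simpa [mul_comm] using this.ofReal_comp
  have := (h1.mul_const ζ).sub (((h2.const_mul (1 / 2 : ℂ)).mul_const (ζ ^ 2)))
  refine this.congr_deriv ?_
  push_cast
  ring

lemma deriv_z_aux (ζ : ℂ) (t : ℝ) :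
    HasDerivAt (fun z : ℂ => (Real.exp t : ℂ) * z - (1 / 2 : ℂ) * (Real.exp (-2 * t) : ℂ) * z ^ 2)
      ((Real.exp t : ℂ) - (Real.exp (-2 * t) : ℂ) * ζ) ζ := by
  have h1 : HasDerivAt (fun z : ℂ => (Real.exp t : ℂ) * z) ((Real.exp t : ℂ)) ζ := by
    simpa using (hasDerivAt_id ζ).const_mul ((Real.exp t : ℂ))
  have h2 : HasDerivAt (fun z : ℂ => (1 / 2 : ℂ) * (Real.exp (-2 * t) : ℂ) * z ^ 2)
      ((1 / 2 : ℂ) * (Real.exp (-2 * t) : ℂ) * (2 * ζ)) ζ := by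
    simpa using (hasDerivAt_pow 2 ζ).const_mul ((1 / 2 : ℂ) * (Real.exp (-2 * t) : ℂ))
  refine (h1.sub h2).congr_deriv ?_
  ring

/-- The univalent Hele-Shaw evolution of the cardioid,
`f(ζ,t) = e^t ζ − ½ e^{−2t} ζ²`, solves the Polubarinova–Galin equation with source strength
`q(t) = e^{2t} − e^{−4t}`: for `t ≥ 0` and `|ζ| = 1`,
`Re[∂_t f(ζ,t) · conj(ζ ∂_ζ f(ζ,t))] = e^{2t} − e^{−4t}`. -/
theorem cardioid_univalent_solution
    (f : ℂ → ℝ → ℂ)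
    (hf : f = fun (ζ : ℂ) (t : ℝ) =>
      (Real.exp t : ℂ) * ζ - (1 / 2 : ℂ) * (Real.exp (-2 * t) : ℂ) * ζ ^ 2) :
    ∀ t : ℝ, 0 ≤ t → ∀ ζ : ℂ, ‖ζ‖ = 1 →
      (deriv (f ζ) t *
          (starRingEnd ℂ) (ζ * deriv (fun z => f z t) ζ)).re =
        Real.exp (2 * t) - Real.exp (-4 * t) := by
  subst hf
  intro t _ ζ hζ
  rw [(deriv_t_aux ζ t).deriv, (deriv_z_aux ζ t).deriv]
  have hn : ζ.re * ζ.re + ζ.im * ζ.im = 1 := by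
    have h := Complex.sq_norm ζ
    rw [hζ] at h
    simpa [Complex.normSq_apply] using h.symm
  have e2 : Real.exp (2 * t) = Real.exp t * Real.exp t := by
    rw [← Real.exp_add]; ring_nf
  have e4 : Real.exp (-4 * t) = Real.exp (-2 * t) * Real.exp (-2 * t) := by
    rw [← Real.exp_add]; ring_nf
  simp only [Complex.mul_re, Complex.sub_re, Complex.add_re, Complex.sub_im, Complex.add_im,
    Complex.mul_im, Complex.conj_re, Complex.conj_im, Complex.ofReal_re, Complex.ofReal_im,
    sq, map_mul, map_sub]
  rw [e2, e4]
  linear_combination (Real.exp t * Real.exp t -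
    Real.exp (-2 * t) * Real.exp (-2 * t) * (ζ.re * ζ.re + ζ.im * ζ.im + 1)) * hn
end
end

section
/- For t ≥ 0 and ζ ∈ ℂ let f(ζ,t) = e^{−t}·ζ − (1/2)·e^{2t}·ζ². Then f solves the Polubarinova–Galin equation with source strength q(t) = e^{4t} − e^{−2t}: for every t ≥ 0 and every ζ with |ζ| = 1, Re[∂_tf(ζ,t)·conj(ζ·∂_ζf(ζ,t))] = e^{4t} − e^{−2t}. -/
open Complex

noncomputable section

/-- The non-locally-univalent evolution of the cardioid,
`f(ζ,t) = e^{−t} ζ − ½ e^{2t} ζ²`, solves the Polubarinova–Galin equation with source strength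
`q(t) = e^{4t} − e^{−2t}`: for `t ≥ 0` and `|ζ| = 1`,
`Re[∂_t f(ζ,t) · conj(ζ ∂_ζ f(ζ,t))] = e^{4t} − e^{−2t}`. -/
theorem cardioid_nonunivalent_solution
    (f : ℂ → ℝ → ℂ)
    (hf : f = fun (ζ : ℂ) (t : ℝ) =>
      (Real.exp (-t) : ℂ) * ζ - (1 / 2 : ℂ) * (Real.exp (2 * t) : ℂ) * ζ ^ 2) :
    ∀ t : ℝ, 0 ≤ t → ∀ ζ : ℂ, ‖ζ‖ = 1 →
      (deriv (f ζ) t *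
          (starRingEnd ℂ) (ζ * deriv (fun z => f z t) ζ)).re =
        Real.exp (4 * t) - Real.exp (-2 * t) := by
  subst hf
  intro t _ ζ hζ
  -- derivative in t
  have hexp1 : HasDerivAt (fun t : ℝ => ((Real.exp (-t) : ℝ) : ℂ))
      ((-Real.exp (-t) : ℝ) : ℂ) t := by
    have : HasDerivAt (fun t : ℝ => Real.exp (-t)) (-Real.exp (-t)) t := by
      simpa using ((hasDerivAt_id t).neg).exp
    exact this.ofReal_comp
  have hexp2 : HasDerivAt (fun t : ℝ => ((Real.exp (2 * t) : ℝ) : ℂ))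
      ((2 * Real.exp (2 * t) : ℝ) : ℂ) t := by
    have : HasDerivAt (fun t : ℝ => Real.exp (2 * t)) (2 * Real.exp (2 * t)) t := by
      have h0 : HasDerivAt (fun t : ℝ => 2 * t) 2 t := by
        simpa [mul_comm] using (hasDerivAt_id t).const_mul (2 : ℝ)
      simpa [mul_comm] using h0.exp
    exact this.ofReal_comp
  have ht : HasDerivAt (fun t : ℝ =>
      (Real.exp (-t) : ℂ) * ζ - (1 / 2 : ℂ) * (Real.exp (2 * t) : ℂ) * ζ ^ 2)
      ((-Real.exp (-t) : ℝ) * ζ - (Real.exp (2 * t) : ℝ) * ζ ^ 2) t := by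
    have h1 := hexp1.mul_const ζ
    have h2 := ((hexp2.const_mul (1 / 2 : ℂ)).mul_const (ζ ^ 2))
    have := h1.sub h2
    refine this.congr_deriv ?_
    push_cast
    ring

  have hz : HasDerivAt (fun z : ℂ =>
      (Real.exp (-t) : ℂ) * z - (1 / 2 : ℂ) * (Real.exp (2 * t) : ℂ) * z ^ 2)
      ((Real.exp (-t) : ℂ) - (Real.exp (2 * t) : ℂ) * ζ) ζ := by
    have h1 := (hasDerivAt_id ζ).const_mul ((Real.exp (-t) : ℂ))
    have h2 := ((hasDerivAt_pow 2 ζ).const_mul ((1 / 2 : ℂ) * (Real.exp (2 * t) : ℂ)))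
    have := h1.sub h2
    refine this.congr_deriv ?_
    push_cast
    ring
  rw [ht.deriv, hz.deriv]
  have hconj : ζ * (starRingEnd ℂ) ζ = 1 := by
    rw [Complex.mul_conj]
    norm_cast
    simp [Complex.sq_norm ζ ▸ (by rw [hζ]; norm_num : ‖ζ‖ ^ 2 = 1)]
  -- expand
  have key : ((-Real.exp (-t) : ℝ) * ζ - (Real.exp (2 * t) : ℝ) * ζ ^ 2) *
      (starRingEnd ℂ) (ζ * ((Real.exp (-t) : ℂ) - (Real.exp (2 * t) : ℂ) * ζ)) =
      ((Real.exp (4 * t) - Real.exp (-2 * t) : ℝ) : ℂ) +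
        (Real.exp t : ℝ) * ((starRingEnd ℂ) ζ - ζ) := by
    have e1 : (Real.exp (-t) : ℂ) * (Real.exp (-t) : ℂ) = (Real.exp (-2 * t) : ℂ) := by
      rw [← Complex.ofReal_mul, ← Real.exp_add]; congr 2; ring
    have e2 : (Real.exp (2 * t) : ℂ) * (Real.exp (2 * t) : ℂ) = (Real.exp (4 * t) : ℂ) := by
      rw [← Complex.ofReal_mul, ← Real.exp_add]; congr 2; ring
    have e3 : (Real.exp (-t) : ℂ) * (Real.exp (2 * t) : ℂ) = (Real.exp t : ℂ) := by
      rw [← Complex.ofReal_mul, ← Real.exp_add]; congr 2; ring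
    have hc2 : (starRingEnd ℂ) ζ * (starRingEnd ℂ) ζ * (ζ * ζ) = 1 := by
      have : (ζ * (starRingEnd ℂ) ζ) * (ζ * (starRingEnd ℂ) ζ) = 1 := by
        rw [hconj]; ring
      linear_combination this
    simp only [map_mul, map_sub, Complex.conj_ofReal, Complex.ofReal_neg, Complex.ofReal_sub]
    linear_combination (-(ζ * (starRingEnd ℂ) ζ)) * e1
      + (ζ * (starRingEnd ℂ) ζ ^ 2 - ζ ^ 2 * (starRingEnd ℂ) ζ) * e3
      + (ζ ^ 2 * (starRingEnd ℂ) ζ ^ 2) * e2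
      + ((Real.exp (4 * t) : ℂ)) * hc2
      + ((Real.exp t : ℂ) * (starRingEnd ℂ) ζ - (Real.exp t : ℂ) * ζ
          - (Real.exp (-2 * t) : ℂ)) * hconj
  rw [key]
  simp only [Complex.add_re, Complex.mul_re, Complex.ofReal_re, Complex.ofReal_im,
    Complex.sub_re, Complex.sub_im, Complex.conj_re, Complex.conj_im]
  ring
end
end

section
/- For every real number b₁ ≥ 1, define ζ₁ = √((1/2)·(1 + 2b₁ − 1/b₁²)), b₂ = −(ζ₁/4)·(1 + 2b₁ + 3/b₁²), b₃ = (2b₁³ + b₁² − 1)/(4b₁⁴), and Q = (1/(16b₁⁶))·(4b₁⁸ + 2b₁⁷ − 12b₁⁶ + b₁⁴ + 6b₁³ + 2b₁² − 3). Then the following four equations hold: (1) b₁·ζ₁⁴ + 2b₂·ζ₁³ − (b₂ − 3b₃·ζ₁)·ζ₁ − 2b₃ = 0; (2) b₁·ζ₁² + b₂·ζ₁ + b₃ + (1/2)·ζ₁²·(1 − ζ₁²) = 0; (3) b₁²·b₃ − (1/2)·ζ₁² = 0; (4) b₁·b₂·ζ₁ + 2b₂·b₃·ζ₁ + b₁·b₃·(ζ₁²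 + 2) + (3/2 + 2Q)·ζ₁² = 0. -/
noncomputable section

/-- For every real `b₁ ≥ 1`, with
`ζ₁ = √(½(1 + 2b₁ − 1/b₁²))`, `b₂ = −(ζ₁/4)(1 + 2b₁ + 3/b₁²)`,
`b₃ = (2b₁³ + b₁² − 1)/(4b₁⁴)` and
`Q = (1/(16b₁⁶))(4b₁⁸ + 2b₁⁷ − 12b₁⁶ + b₁⁴ + 6b₁³ + 2b₁² − 3)`, the four structural equations
of the Löwner–Kufarev evolution of the cardioid hold. -/
theorem cardioid_riemann_surface_parameters
    (b₁ : ℝ) (hb₁ : 1 ≤ b₁)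
    (ζ₁ b₂ b₃ Q : ℝ)
    (hζ₁ : ζ₁ = Real.sqrt ((1 / 2) * (1 + 2 * b₁ - 1 / b₁ ^ 2)))
    (hb₂ : b₂ = -(ζ₁ / 4) * (1 + 2 * b₁ + 3 / b₁ ^ 2))
    (hb₃ : b₃ = (2 * b₁ ^ 3 + b₁ ^ 2 - 1) / (4 * b₁ ^ 4))
    (hQ : Q = (1 / (16 * b₁ ^ 6)) *
      (4 * b₁ ^ 8 + 2 * b₁ ^ 7 - 12 * b₁ ^ 6 + b₁ ^ 4 + 6 * b₁ ^ 3 + 2 * b₁ ^ 2 - 3)) :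
    b₁ * ζ₁ ^ 4 + 2 * b₂ * ζ₁ ^ 3 - (b₂ - 3 * b₃ * ζ₁) * ζ₁ - 2 * b₃ = 0 ∧
    b₁ * ζ₁ ^ 2 + b₂ * ζ₁ + b₃ + (1 / 2) * ζ₁ ^ 2 * (1 - ζ₁ ^ 2) = 0 ∧
    b₁ ^ 2 * b₃ - (1 / 2) * ζ₁ ^ 2 = 0 ∧
    b₁ * b₂ * ζ₁ + 2 * b₂ * b₃ * ζ₁ + b₁ * b₃ * (ζ₁ ^ 2 + 2) +
      (3 / 2 + 2 * Q) * ζ₁ ^ 2 = 0 := by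
  have hb0 : b₁ ≠ 0 := by positivity
  have harg : 0 ≤ (1 / 2) * (1 + 2 * b₁ - 1 / b₁ ^ 2) := by
    have h1 : 1 / b₁ ^ 2 ≤ 1 := by
      rw [div_le_one (by positivity)]; nlinarith
    nlinarith
  have hs : ζ₁ ^ 2 = (1 / 2) * (1 + 2 * b₁ - 1 / b₁ ^ 2) := by
    rw [hζ₁, Real.sq_sqrt harg]
  have hs' : 2 * b₁ ^ 2 * ζ₁ ^ 2 = 2 * b₁ ^ 3 + b₁ ^ 2 - 1 := by
    rw [hs]; field_simp; ring
  have hs4 : 4 * b₁ ^ 4 * ζ₁ ^ 4 = (2 * b₁ ^ 3 + b₁ ^ 2 - 1) ^ 2 := by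
    rw [← hs']; ring
  subst hb₂ hb₃ hQ
  refine ⟨?_, ?_, ?_, ?_⟩
  · field_simp
    linear_combination (-(b₁ ^ 2 + 3) * ζ₁ ^ 2 + 2) * hs'
  · field_simp
    linear_combination (2 * b₁ ^ 3 + b₁ ^ 2 - 3) * hs' + (-1) * hs4
  · field_simp
    linear_combination (-2) * hs'
  · field_simp
    linear_combination (-256 * b₁ ^ 3) * hs'
end
end

section
/- Let d ≥ 1 be an integer, let h be analytic in a neighborhood of a point z ∈ ℂ with z ≠ 1 and h(z) ≠ 0, and set g(w) = (w − 1)^d·h(w). Then 2·|g(z)|²·Re(1 + z·g'(z)/g(z)) = 2·|z − 1|^{2(d−1)}·|h(z)|²·( |z − 1|²·Re(z·h'(z)/h(z)) + (d+1)·( |z − (d+2)/(2d+2)|² − (d/(2d+2))² ) ). -/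
open Complex

noncomputable section

/-- For an integer `d ≥ 1`, a function `h` analytic at `z ≠ 1` with
`h(z) ≠ 0`, and `g(w) = (w−1)^d h(w)`, one has the identity
`2|g(z)|² Re(1 + z g'(z)/g(z)) = 2|z−1|^{2(d−1)} |h(z)|² (|z−1|² Re(z h'(z)/h(z))
  + (d+1)(|z − (d+2)/(2d+2)|² − (d/(2d+2))²))`. -/
theorem laplacian_identity_near_boundary_zero
    (d : ℕ) (hd : 1 ≤ d)
    (z : ℂ) (hz : z ≠ 1)
    (h : ℂ → ℂ) (hh : AnalyticAt ℂ h z) (hhz : h z ≠ 0)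
    (g : ℂ → ℂ) (hg : g = fun w => (w - 1) ^ d * h w) :
    2 * ‖g z‖ ^ 2 * (1 + z * deriv g z / g z).re =
      2 * ‖z - 1‖ ^ (2 * (d - 1)) * ‖h z‖ ^ 2 *
        (‖z - 1‖ ^ 2 * (z * deriv h z / h z).re +
          ((d : ℝ) + 1) *
            (‖z - ((d : ℂ) + 2) / (2 * (d : ℂ) + 2)‖ ^ 2 -
              ((d : ℝ) / (2 * (d : ℝ) + 2)) ^ 2)) := by
  have ha : z - 1 ≠ 0 := sub_ne_zero.mpr hz
  have hdh : DifferentiableAt ℂ h z := hh.differentiableAt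
  have hd1 : d - 1 + 1 = d := Nat.succ_pred_eq_of_pos hd
  have hpow : (z - 1) ^ (d - 1) * (z - 1) = (z - 1) ^ d := by rw [← pow_succ, hd1]
  have h1 : HasDerivAt (fun w : ℂ => (w - 1) ^ d) ((d : ℂ) * (z - 1) ^ (d - 1)) z := by
    simpa [Pi.pow_def] using ((hasDerivAt_id z).sub_const 1).pow d
  have Hg : HasDerivAt g ((d : ℂ) * (z - 1) ^ (d - 1) * h z + (z - 1) ^ d * deriv h z) z := by
    rw [hg]; exact h1.mul hdh.hasDerivAt
  have hgz : g z = (z - 1) ^ d * h z := by rw [hg]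
  have hp1 : (z - 1) ^ (d - 1) ≠ 0 := pow_ne_zero _ ha
  have key1 : z * deriv g z / g z = (d : ℂ) * z / (z - 1) + z * deriv h z / h z := by
    rw [Hg.deriv, hgz, ← hpow]
    field_simp
  have habs : ‖g z‖ ^ 2 =
      ‖z - 1‖ ^ (2 * (d - 1)) * ‖z - 1‖ ^ 2 *
        ‖h z‖ ^ 2 := by
    rw [hgz, norm_mul, norm_pow, mul_pow, ← pow_mul, show d * 2 = 2 * (d - 1) + 2 by omega,
      pow_add]
  have hc : (((d : ℂ) + 2) / (2 * (d : ℂ) + 2)) = ((((d : ℝ) + 2) / (2 * (d : ℝ) + 2) : ℝ) : ℂ) := by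
    push_cast; ring
  have hns : Complex.normSq (z - 1) ≠ 0 := by
    simpa [Complex.normSq_eq_zero] using ha
  have hns' : (z.re - 1) * (z.re - 1) + z.im * z.im ≠ 0 := by
    simpa [Complex.normSq_apply, Complex.sub_re, Complex.sub_im] using hns
  have hden : (2 * (d : ℝ) + 2) ≠ 0 := by positivity
  have main : ‖z - 1‖ ^ 2 * (1 + ((d : ℂ) * z / (z - 1)).re) =
      ((d : ℝ) + 1) *
        (‖z - ((d : ℂ) + 2) / (2 * (d : ℂ) + 2)‖ ^ 2 -
          ((d : ℝ) / (2 * (d : ℝ) + 2)) ^ 2) := by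
    rw [hc, Complex.sq_norm, Complex.sq_norm]
    simp only [Complex.div_re, Complex.normSq_apply, Complex.sub_re, Complex.sub_im,
      Complex.mul_re, Complex.mul_im, Complex.ofReal_re, Complex.ofReal_im,
      Complex.one_re, Complex.one_im, Complex.natCast_re, Complex.natCast_im]
    have hne : (z.re - 1) ^ 2 + (z.im - 0) ^ 2 ≠ 0 := by simpa [sq] using hns'
    field_simp
    ring
  simp only [key1, habs, Complex.add_re, Complex.one_re]
  linear_combination
    2 * ‖z - 1‖ ^ (2 * (d - 1)) * ‖h z‖ ^ 2 * main
end
end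

section
/- Let b ∈ ℂ ∖ {0}, let q ∈ ℝ, let m ≥ n ≥ 0 be integers, let ω₁, …, ω_m ∈ ℂ ∖ {0} be pairwise distinct with ω_k·conj(ω_j) ≠ 1 for all k, j, and let ζ₁, …, ζ_n ∈ ℂ with |ζ_j| > 1 and ζ_j ≠ ω_k for all j, k. Set g(ζ) = b·∏_{k=1}^m (ζ − ω_k) / ∏_{j=1}^n (ζ − ζ_j). For 1 ≤ k ≤ m define A_k = (q/|b|²)·∏_{j=1}^n (ω_k − ζ_j)·∏_{j=1}^n conj(1/conj(ω_k) − ζ_j) / [ ∏_{j≠k} (ω_k − ω_j) · ∏_{j=1}^m conj(1/conj(ω_k) − ω_j) ]; define A_∞ = q·∏_{j=1}^n conj(ζ_j)/( |b|²·∏_{j=1}^m conj(ω_j) ) if m = n, and A_∞ = 0 if m > n; and define A₀ ∈ ℂ by Re A₀ = Re A_∞ + Re Σ_{k=1}^m A_k/ω_k and Im A₀ = Im Σ_{|ω_j| > 1} 2A_j/ω_j. Then the function P(ζ) = A₀ + Σ_{|ω_j| > 1} 2A_j/(ζ − ω_j) + Σ_{|ω_j| < 1} 2·conj(A_j)·ζ/(1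 − conj(ω_j)·ζ) is analytic in a neighborhood of the closed unit disk, satisfies Re P(ζ) = q/|g(ζ)|² for every ζ with |ζ| = 1, and satisfies Im P(0) = 0. -/
open Complex Metric Set Finset

noncomputable section

open Polynomial

lemma rpis_deg_le {ι : Type*} (s : Finset ι) (f : ι → ℂ[X])
    (h : ∀ i ∈ s, natDegree (f i) ≤ 1) : natDegree (∏ i ∈ s, f i) ≤ s.card := by
  refine le_trans (natDegree_prod_le s f) ?_
  calc ∑ i ∈ s, natDegree (f i) ≤ ∑ i ∈ s, 1 := Finset.sum_le_sum h
  _ = s.card := by simp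

lemma rpis_deg_one (a : ℂ) : natDegree ((1 : ℂ[X]) - C a * X) ≤ 1 := by
  refine le_trans (natDegree_sub_le _ _) (max_le (by simp) (le_trans natDegree_mul_le (by simp)))

theorem rpis_key (q β : ℂ) (hβ : β ≠ 0) (hβc : (starRingEnd ℂ) β = β) (hqc : (starRingEnd ℂ) q = q)
    (m n : ℕ) (hmn : n ≤ m)
    (ω : Fin m → ℂ) (hω0 : ∀ k, ω k ≠ 0)
    (hωdist : ∀ k j, k ≠ j → ω k ≠ ω j)
    (hωrefl : ∀ k j, ω k * (starRingEnd ℂ) (ω j) ≠ 1)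
    (ζp : Fin n → ℂ)
    (A : Fin m → ℂ)
    (hAk : ∀ k, A k * ((∏ j ∈ Finset.univ.erase k, (ω k - ω j)) *
        ∏ j, (1 - (starRingEnd ℂ) (ω j) * ω k))
      = q / β * (ω k ^ (m - n)) *
        ((∏ j, (ω k - ζp j)) * ∏ j, (1 - (starRingEnd ℂ) (ζp j) * ω k)))
    (Ainf : ℂ)
    (hAinf : Ainf = if m = n then q * (∏ j, (starRingEnd ℂ) (ζp j)) /
        (β * ∏ j, (starRingEnd ℂ) (ω j)) else 0) :
    ∀ ζ : ℂ, (∀ k, ζ ≠ ω k) → (∀ k, (starRingEnd ℂ) (ω k) * ζ ≠ 1) →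
      (((Ainf.re + (∑ k, A k / ω k).re : ℝ) : ℂ) +
        ∑ k, (A k / (ζ - ω k) + (starRingEnd ℂ) (A k) * ζ / (1 - (starRingEnd ℂ) (ω k) * ζ)))
      = q / β * ζ ^ (m - n) * ((∏ j, (ζ - ζp j)) * ∏ j, (1 - (starRingEnd ℂ) (ζp j) * ζ)) /
          ((∏ k, (ζ - ω k)) * ∏ k, (1 - (starRingEnd ℂ) (ω k) * ζ)) := by
  classical
  have hωc0 : ∀ k, (starRingEnd ℂ) (ω k) ≠ 0 := fun k => by
    simpa using hω0 k
  have hrefl' : ∀ k j, (1 : ℂ) - (starRingEnd ℂ) (ω j) * ω k ≠ 0 := fun k j h => by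
    exact hωrefl k j (by linear_combination -h)
  set S : ℂ := ∑ k, A k / ω k with hS
  set cc : ℂ := ((Ainf.re + S.re : ℝ) : ℂ) with hcc
  set K : ℂ := cc - S - (starRingEnd ℂ) Ainf with hK
  set Pw : ℂ[X] := ∏ k, (X - C (ω k)) with hPw
  set Qw : ℂ[X] := ∏ k, (1 - C ((starRingEnd ℂ) (ω k)) * X) with hQw
  set Pz : ℂ[X] := ∏ j, (X - C (ζp j)) with hPz
  set Qz : ℂ[X] := ∏ j, (1 - C ((starRingEnd ℂ) (ζp j)) * X) with hQz
  set Φ : ℂ[X] := Pw * Qw with hΦ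
  set Pl : ℂ[X] := C (q / β) * X ^ (m - n) * (Pz * Qz) with hPl
  set Pr : ℂ[X] := C cc * Φ +
      ((∑ k, C (A k) * ((∏ j ∈ Finset.univ.erase k, (X - C (ω j))) * Qw)) +
       ∑ k, C ((starRingEnd ℂ) (A k)) *
          (X * (Pw * ∏ j ∈ Finset.univ.erase k, (1 - C ((starRingEnd ℂ) (ω j)) * X)))) with hPr
  -- basic degree facts
  have hdPw : Pw.natDegree ≤ m := by
    exact le_trans (rpis_deg_le univ (fun i => X - C (ω i)) (fun i _ => (natDegree_X_sub_C (ω i)).le)) (by simp)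
  have hdQw : Qw.natDegree ≤ m := by
    simpa using rpis_deg_le univ (fun k => 1 - C ((starRingEnd ℂ) (ω k)) * X)
      (fun i _ => rpis_deg_one _)
  have hdPz : Pz.natDegree ≤ n := by
    exact le_trans (rpis_deg_le univ (fun i => X - C (ζp i)) (fun i _ => (natDegree_X_sub_C (ζp i)).le)) (by simp)
  have hdQz : Qz.natDegree ≤ n := by
    simpa using rpis_deg_le univ (fun k => 1 - C ((starRingEnd ℂ) (ζp k)) * X)
      (fun i _ => rpis_deg_one _)
  have hdΦ : Φ.natDegree ≤ 2 * m := by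
    refine le_trans natDegree_mul_le ?_; omega
  have hdPl : Pl.natDegree ≤ 2 * m := by
    refine le_trans natDegree_mul_le (le_trans (add_le_add natDegree_mul_le natDegree_mul_le) ?_)
    simp only [natDegree_C, natDegree_X_pow]
    omega
  have hdPr : Pr.natDegree ≤ 2 * m := by
    refine le_trans (natDegree_add_le _ _) ?_
    refine max_le (le_trans natDegree_mul_le (by simpa using hdΦ)) ?_
    refine le_trans (natDegree_add_le _ _) (max_le ?_ ?_)
    · refine natDegree_sum_le_of_forall_le _ _ (fun k _ => ?_)
      refine le_trans natDegree_mul_le ?_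
      have h1 : natDegree (∏ j ∈ Finset.univ.erase k, (X - C (ω j))) ≤ m - 1 := by
        refine le_trans (rpis_deg_le _ _ (fun i _ => (natDegree_X_sub_C (ω i)).le)) ?_
        simp [Finset.card_erase_of_mem]
      have := natDegree_mul_le (p := ∏ j ∈ Finset.univ.erase k, (X - C (ω j))) (q := Qw)
      simp only [natDegree_C, zero_add]
      have hm : 1 ≤ m := k.pos
      refine le_trans this ?_; omega
    · refine natDegree_sum_le_of_forall_le _ _ (fun k _ => ?_)
      have h1 : natDegree (∏ j ∈ Finset.univ.erase k, (1 - C ((starRingEnd ℂ) (ω j)) * X)) ≤ m - 1 := by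
        refine le_trans (rpis_deg_le _ _ (fun i _ => rpis_deg_one _)) ?_
        simp [Finset.card_erase_of_mem]
      refine le_trans natDegree_mul_le ?_
      have h2 : natDegree (X * (Pw * ∏ j ∈ Finset.univ.erase k, (1 - C ((starRingEnd ℂ) (ω j)) * X)))
          ≤ 1 + (m + (m-1)) := by
        refine le_trans natDegree_mul_le ?_
        have := natDegree_mul_le (p := Pw)
          (q := ∏ j ∈ Finset.univ.erase k, (1 - C ((starRingEnd ℂ) (ω j)) * X))
        simp only [natDegree_X]
        omega
      have hm : 1 ≤ m := k.pos
      simp only [natDegree_C, zero_add]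
      omega
  have evsimp : True := trivial
  have hpoly : Pr = Pl + C K * Φ := by
    have hz : Pr - (Pl + C K * Φ) = 0 := by
      apply eq_zero_of_natDegree_lt_card_of_eval_eq_zero _
        (f := Sum.elim ω (Sum.elim (fun k => ((starRingEnd ℂ) (ω k))⁻¹) (fun _ : Unit => 0)))
      · rintro (a | a | a) (c | c | c) h <;>
          simp only [Sum.elim_inl, Sum.elim_inr] at h
        · by_contra hne
          exact hωdist a c (by simpa using hne) h
        · exact absurd (by rw [h]; exact inv_mul_cancel₀ (hωc0 c)) (hωrefl a c)
        · exact absurd h (hω0 a)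
        · exact absurd (by rw [← h]; exact inv_mul_cancel₀ (hωc0 a)) (hωrefl c a)
        · have : ω a = ω c := by
            have := congrArg (starRingEnd ℂ) (inv_injective h)
            simpa using this
          by_contra hne
          exact hωdist a c (by simpa using hne) this
        · exact absurd (inv_eq_zero.mp h) (hωc0 a)
        · exact absurd h.symm (hω0 c)
        · exact absurd (inv_eq_zero.mp h.symm) (hωc0 c)
        · rfl
      · rintro (k | k | k)
        · -- evaluation at ω k
          simp only [Sum.elim_inl, eval_sub, eval_add, eval_mul, hPr, hPl, hΦ, hPw, hQw, hPz,
            hQz, eval_finset_sum, eval_prod, eval_pow, eval_X, eval_C, eval_one]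
          have h0 : ∏ j, (ω k - ω j) = 0 :=
            Finset.prod_eq_zero (f := fun j => ω k - ω j) (Finset.mem_univ k) (sub_self (ω k))
          have h1 : (∑ j, A j * ((∏ i ∈ Finset.univ.erase j, (ω k - ω i)) *
                ∏ i, (1 - (starRingEnd ℂ) (ω i) * ω k)))
              = A k * ((∏ i ∈ Finset.univ.erase k, (ω k - ω i)) *
                ∏ i, (1 - (starRingEnd ℂ) (ω i) * ω k)) := by
            refine Finset.sum_eq_single_of_mem k (Finset.mem_univ k) (fun j _ hjk => ?_)
            rw [Finset.prod_eq_zero (f := fun i => ω k - ω i)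
              (Finset.mem_erase.mpr ⟨Ne.symm hjk, Finset.mem_univ k⟩) (sub_self (ω k))]
            ring
          rw [h0]
          simp only [mul_zero, zero_mul, Finset.sum_const_zero, add_zero, zero_add]
          rw [h1]
          linear_combination hAk k
        · -- evaluation at (conj (ω k))⁻¹
          simp only [Sum.elim_inr, Sum.elim_inl, eval_sub, eval_add, eval_mul, hPr, hPl, hΦ,
            hPw, hQw, hPz, hQz, eval_finset_sum, eval_prod, eval_pow, eval_X, eval_C, eval_one]
          set c : ℂ := (starRingEnd ℂ) (ω k) with hc
          set u : ℂ := c⁻¹ with hu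
          have hcne : c ≠ 0 := hωc0 k
          have hcu : c * u = 1 := mul_inv_cancel₀ hcne
          have h0 : ∏ j, (1 - (starRingEnd ℂ) (ω j) * u) = 0 :=
            Finset.prod_eq_zero (f := fun j => 1 - (starRingEnd ℂ) (ω j) * u) (Finset.mem_univ k)
              (by beta_reduce; rw [← hc, hu, mul_inv_cancel₀ hcne, sub_self])
          have h2 : (∑ j, (starRingEnd ℂ) (A j) * (u * ((∏ i, (u - ω i)) *
                ∏ i ∈ Finset.univ.erase j, (1 - (starRingEnd ℂ) (ω i) * u))))
              = (starRingEnd ℂ) (A k) * (u * ((∏ i, (u - ω i)) *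
                ∏ i ∈ Finset.univ.erase k, (1 - (starRingEnd ℂ) (ω i) * u))) := by
            refine Finset.sum_eq_single_of_mem k (Finset.mem_univ k) (fun j _ hjk => ?_)
            rw [Finset.prod_eq_zero (f := fun i => 1 - (starRingEnd ℂ) (ω i) * u)
              (Finset.mem_erase.mpr ⟨Ne.symm hjk, Finset.mem_univ k⟩)
              (by beta_reduce; rw [← hc, hu, mul_inv_cancel₀ hcne, sub_self])]
            ring
          rw [h0]
          simp only [mul_zero, zero_mul, Finset.sum_const_zero, add_zero, zero_add]
          rw [h2]
          -- rewrite the products at u in terms of products at c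
          have hA1 : ∏ i, (u - ω i) = (∏ i, (1 - ω i * c)) * u ^ m := by
            have he : ∀ i ∈ Finset.univ, (u - ω i) = (1 - ω i * c) * u := fun i _ => by
              rw [sub_mul, one_mul, mul_assoc, hcu, mul_one]
            rw [Finset.prod_congr rfl he, Finset.prod_mul_distrib, Finset.prod_const,
              Finset.card_univ, Fintype.card_fin]
          have hA2 : ∏ i ∈ Finset.univ.erase k, (1 - (starRingEnd ℂ) (ω i) * u)
              = (∏ i ∈ Finset.univ.erase k, (c - (starRingEnd ℂ) (ω i))) * u ^ (m - 1) := by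
            have he : ∀ i ∈ Finset.univ.erase k, (1 - (starRingEnd ℂ) (ω i) * u)
                = (c - (starRingEnd ℂ) (ω i)) * u := fun i _ => by
              rw [sub_mul, hcu]
            rw [Finset.prod_congr rfl he, Finset.prod_mul_distrib, Finset.prod_const,
              Finset.card_erase_of_mem (Finset.mem_univ k), Finset.card_univ, Fintype.card_fin]
          have hA3 : ∏ j, (u - ζp j) = (∏ j, (1 - ζp j * c)) * u ^ n := by
            have he : ∀ i ∈ Finset.univ, (u - ζp i) = (1 - ζp i * c) * u := fun i _ => by
              rw [sub_mul, one_mul, mul_assoc, hcu, mul_one]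
            rw [Finset.prod_congr rfl he, Finset.prod_mul_distrib, Finset.prod_const,
              Finset.card_univ, Fintype.card_fin]
          have hA4 : ∏ j, (1 - (starRingEnd ℂ) (ζp j) * u)
              = (∏ j, (c - (starRingEnd ℂ) (ζp j))) * u ^ n := by
            have he : ∀ i ∈ Finset.univ, (1 - (starRingEnd ℂ) (ζp i) * u)
                = (c - (starRingEnd ℂ) (ζp i)) * u := fun i _ => by
              rw [sub_mul, hcu]
            rw [Finset.prod_congr rfl he, Finset.prod_mul_distrib, Finset.prod_const,
              Finset.card_univ, Fintype.card_fin]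
          have hconj := congrArg (starRingEnd ℂ) (hAk k)
          simp only [map_mul, map_prod, map_sub, map_one, map_div₀, map_pow, hqc, hβc,
            Complex.conj_conj] at hconj
          rw [hA1, hA2, hA3, hA4]
          have p1 : u * (u ^ m * u ^ (m - 1)) = u ^ (2 * m) := by
            rw [← pow_add, ← pow_succ']
            congr 1
            have := k.pos
            omega
          have p2 : u ^ (m - n) * (u ^ n * u ^ n) = u ^ (m + n) := by
            rw [← pow_add, ← pow_add]
            congr 1
            omega
          have hpow : c ^ (m - n) * u ^ (2 * m) = u ^ (m + n) := by
            rw [show 2 * m = m - n + (m + n) by omega, pow_add, ← mul_assoc, ← mul_pow,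
              hcu, one_pow, one_mul]
          linear_combination ((starRingEnd ℂ) (A k) * (∏ i, (1 - ω i * c)) *
              (∏ i ∈ Finset.univ.erase k, (c - (starRingEnd ℂ) (ω i)))) * p1 +
            u ^ (2 * m) * hconj +
            (q / β * (∏ j, (c - (starRingEnd ℂ) (ζp j))) * (∏ j, (1 - ζp j * c))) * hpow -
            (q / β * (∏ j, (c - (starRingEnd ℂ) (ζp j))) * (∏ j, (1 - ζp j * c))) * p2
        · -- evaluation at 0
          simp only [Sum.elim_inr, eval_sub, eval_add, eval_mul, hPr, hPl, hΦ, hPw, hQw, hPz,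
            hQz, eval_finset_sum, eval_prod, eval_pow, eval_X, eval_C, eval_one]
          simp only [mul_zero, sub_zero, zero_mul, Finset.prod_const_one, mul_one,
            Finset.sum_const_zero, add_zero]
          have h3 : ∑ j, A j * (∏ i ∈ Finset.univ.erase j, ((0:ℂ) - ω i))
              = -S * ∏ i, ((0:ℂ) - ω i) := by
            have he : ∀ j ∈ Finset.univ, A j * (∏ i ∈ Finset.univ.erase j, ((0:ℂ) - ω i))
                = -(A j / ω j * ∏ i, ((0:ℂ) - ω i)) := fun j _ => by
              rw [← Finset.mul_prod_erase Finset.univ (fun i => (0:ℂ) - ω i) (Finset.mem_univ j)]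
              field_simp [hω0 j]
              ring
            rw [Finset.sum_congr rfl he, hS, neg_mul, Finset.sum_mul, ← Finset.sum_neg_distrib]
          have h4 : (starRingEnd ℂ) Ainf * ∏ i, ((0:ℂ) - ω i)
              = q / β * (0:ℂ) ^ (m - n) * ∏ j, ((0:ℂ) - ζp j) := by
            rcases eq_or_ne m n with hmn' | hmn'
            · subst hmn'
              rw [hAinf, if_pos rfl]
              simp only [map_div₀, map_mul, map_prod, Complex.conj_conj, hqc, hβc]
              have hW : ∏ i, ((0:ℂ) - ω i) = (-1 : ℂ) ^ m * ∏ i, ω i := by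
                have : ∀ i ∈ Finset.univ, ((0:ℂ) - ω i) = (-1) * ω i := fun i _ => by ring
                rw [Finset.prod_congr rfl this, Finset.prod_mul_distrib, Finset.prod_const,
                  Finset.card_univ, Fintype.card_fin]
              have hWz : ∏ j, ((0:ℂ) - ζp j) = (-1 : ℂ) ^ m * ∏ j, ζp j := by
                have : ∀ i ∈ Finset.univ, ((0:ℂ) - ζp i) = (-1) * ζp i := fun i _ => by ring
                rw [Finset.prod_congr rfl this, Finset.prod_mul_distrib, Finset.prod_const,
                  Finset.card_univ, Fintype.card_fin]
              rw [hW, hWz, Nat.sub_self, pow_zero]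
              have hωprod : (∏ i, ω i) ≠ 0 := Finset.prod_ne_zero_iff.mpr fun i _ => hω0 i
              field_simp
            · rw [hAinf, if_neg (fun h => hmn' h), map_zero, zero_mul,
                zero_pow (by omega : m - n ≠ 0)]
              ring
          rw [h3, hK]
          linear_combination h4
      · -- degree bound
        have hd : (Pr - (Pl + C K * Φ)).natDegree ≤ 2 * m := by
          refine le_trans (natDegree_sub_le _ _) (max_le hdPr ?_)
          refine le_trans (natDegree_add_le _ _) (max_le hdPl ?_)
          refine le_trans natDegree_mul_le ?_
          simpa using hdΦ
        simp only [Fintype.card_sum, Fintype.card_fin, Fintype.card_unit]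
        omega
    exact sub_eq_zero.mp hz

  -- evaluations at 1
  have hΦ1 : Φ.eval 1 = (∏ j, (1 - ω j)) * ∏ j, (1 - (starRingEnd ℂ) (ω j)) := by
    rw [hΦ, hPw, hQw]
    simp [eval_prod]
  have hPr1 : Pr.eval 1 = cc * ((∏ j, (1 - ω j)) * ∏ j, (1 - (starRingEnd ℂ) (ω j))) +
      ((∑ k, A k * ((∏ j ∈ Finset.univ.erase k, (1 - ω j)) *
          ∏ j, (1 - (starRingEnd ℂ) (ω j)))) +
       ∑ k, (starRingEnd ℂ) (A k) * ((∏ j, (1 - ω j)) *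
          ∏ j ∈ Finset.univ.erase k, (1 - (starRingEnd ℂ) (ω j)))) := by
    rw [hPr, hΦ, hPw, hQw]
    simp only [eval_add, eval_mul, eval_C, eval_finset_sum, eval_prod, eval_sub, eval_one,
      eval_X, mul_one, one_mul]
  have hPl1 : Pl.eval 1 = q / β * ((∏ j, (1 - ζp j)) * ∏ j, (1 - (starRingEnd ℂ) (ζp j))) := by
    rw [hPl, hPz, hQz]
    simp only [eval_mul, eval_C, eval_pow, eval_X, one_pow, mul_one, eval_prod, eval_sub,
      eval_one]
  have h1ω : ∀ j, (1 : ℂ) - ω j ≠ 0 := fun j h => by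
    have hj : ω j = 1 := by linear_combination -h
    exact hωrefl j j (by rw [hj]; simp)
  have h1ωc : ∀ j, (1 : ℂ) - (starRingEnd ℂ) (ω j) ≠ 0 := fun j h => by
    have hj : (starRingEnd ℂ) (ω j) = 1 := by linear_combination -h
    have hj' : ω j = 1 := by
      have := congrArg (starRingEnd ℂ) hj
      simpa using this
    exact hωrefl j j (by rw [hj']; simp)
  have hΦ1ne : Φ.eval 1 ≠ 0 := by
    rw [hΦ1]
    exact mul_ne_zero (Finset.prod_ne_zero_iff.mpr fun j _ => h1ω j)
      (Finset.prod_ne_zero_iff.mpr fun j _ => h1ωc j)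
  have hcΦ1 : (starRingEnd ℂ) (Φ.eval 1) = Φ.eval 1 := by
    rw [hΦ1]
    simp only [map_mul, map_prod, map_sub, map_one, Complex.conj_conj]
    exact mul_comm _ _
  have hcPl1 : (starRingEnd ℂ) (Pl.eval 1) = Pl.eval 1 := by
    rw [hPl1]
    simp only [map_mul, map_div₀, map_prod, map_sub, map_one, Complex.conj_conj, hqc, hβc]
    ring
  have hcPr1 : (starRingEnd ℂ) (Pr.eval 1) = Pr.eval 1 := by
    rw [hPr1]
    simp only [map_add, map_mul, map_sum, map_prod, map_sub, map_one, Complex.conj_conj,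
      hcc, Complex.conj_ofReal]
    rw [mul_comm (∏ j, (1 - (starRingEnd ℂ) (ω j))) (∏ j, (1 - ω j)), add_comm
      (∑ k, (starRingEnd ℂ) (A k) * ((∏ j ∈ Finset.univ.erase k, (1 - (starRingEnd ℂ) (ω j))) *
        ∏ j, (1 - ω j)))]
    congr 1
    congr 1
    · exact Finset.sum_congr rfl fun k _ => by ring
    · exact Finset.sum_congr rfl fun k _ => by ring
  have e1 : Pr.eval 1 = Pl.eval 1 + K * Φ.eval 1 := by rw [hpoly]; simp
  have e2 : Pr.eval 1 = Pl.eval 1 + (starRingEnd ℂ) K * Φ.eval 1 := by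
    have hc := congrArg (starRingEnd ℂ) e1
    rw [map_add, map_mul, hcPr1, hcPl1, hcΦ1] at hc
    exact hc
  have hKeq : (starRingEnd ℂ) K = K := by
    have h6 : (K - (starRingEnd ℂ) K) * Φ.eval 1 = 0 := by linear_combination e2 - e1
    rcases mul_eq_zero.mp h6 with h | h
    · linear_combination -h
    · exact absurd h hΦ1ne
  have hKsum : K + (starRingEnd ℂ) K = 0 := by
    have hSc := Complex.add_conj S
    have hAc := Complex.add_conj Ainf
    push_cast at hSc hAc
    rw [hK]
    simp only [map_sub, Complex.conj_conj, hcc, Complex.conj_ofReal]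
    push_cast
    linear_combination -hSc - hAc
  have hK0 : K = 0 := by
    rw [hKeq] at hKsum
    linear_combination hKsum / 2
  -- final conclusion
  intro ζ hζω hζu
  have hζsub : ∀ k, ζ - ω k ≠ 0 := fun k => sub_ne_zero.mpr (hζω k)
  have hζd : ∀ k, (1 : ℂ) - (starRingEnd ℂ) (ω k) * ζ ≠ 0 := fun k h => hζu k (by
    linear_combination -h)
  have hΦζ : Φ.eval ζ = (∏ k, (ζ - ω k)) * ∏ k, (1 - (starRingEnd ℂ) (ω k) * ζ) := by
    rw [hΦ, hPw, hQw]
    simp [eval_prod]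
  have hΦζne : ((∏ k, (ζ - ω k)) * ∏ k, (1 - (starRingEnd ℂ) (ω k) * ζ)) ≠ 0 :=
    mul_ne_zero (Finset.prod_ne_zero_iff.mpr fun k _ => hζsub k)
      (Finset.prod_ne_zero_iff.mpr fun k _ => hζd k)
  have hPlζ : Pl.eval ζ = q / β * ζ ^ (m - n) *
      ((∏ j, (ζ - ζp j)) * ∏ j, (1 - (starRingEnd ℂ) (ζp j) * ζ)) := by
    rw [hPl, hPz, hQz]
    simp [eval_prod]
  have main : (cc + ∑ k, (A k / (ζ - ω k) +
      (starRingEnd ℂ) (A k) * ζ / (1 - (starRingEnd ℂ) (ω k) * ζ))) *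
      ((∏ k, (ζ - ω k)) * ∏ k, (1 - (starRingEnd ℂ) (ω k) * ζ)) = Pl.eval ζ := by
    have h5 : Pr.eval ζ = Pl.eval ζ := by rw [hpoly, hK0]; simp
    rw [← h5, hPr, hΦ, hPw, hQw]
    simp only [eval_add, eval_mul, eval_C, eval_finset_sum, eval_prod, eval_sub, eval_one,
      eval_X]
    rw [add_mul, Finset.sum_mul]
    congr 1
    have hterm : ∀ k ∈ Finset.univ, (A k / (ζ - ω k) +
        (starRingEnd ℂ) (A k) * ζ / (1 - (starRingEnd ℂ) (ω k) * ζ)) *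
        ((∏ j, (ζ - ω j)) * ∏ j, (1 - (starRingEnd ℂ) (ω j) * ζ))
        = A k * ((∏ j ∈ Finset.univ.erase k, (ζ - ω j)) *
            ∏ j, (1 - (starRingEnd ℂ) (ω j) * ζ)) +
          (starRingEnd ℂ) (A k) * (ζ * ((∏ j, (ζ - ω j)) *
            ∏ j ∈ Finset.univ.erase k, (1 - (starRingEnd ℂ) (ω j) * ζ))) := by
      intro k _
      rw [← Finset.mul_prod_erase Finset.univ (fun j => ζ - ω j) (Finset.mem_univ k),
        ← Finset.mul_prod_erase Finset.univ (fun j => 1 - (starRingEnd ℂ) (ω j) * ζ)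
          (Finset.mem_univ k)]
      rw [div_add_div _ _ (hζsub k) (hζd k), div_mul_eq_mul_div,
        div_eq_iff (mul_ne_zero (hζsub k) (hζd k))]
      ring
    rw [Finset.sum_congr rfl hterm, Finset.sum_add_distrib]
  rw [eq_div_iff hΦζne, main, hPlζ]


/-- Explicit form of the Poisson integral for a rational `g`.
With `g(ζ) = b ∏(ζ − ω_k)/∏(ζ − ζ_j)` (zeros `ω_k` pairwise distinct, nonzero, no two related
by reflection in the unit circle; poles `ζ_j` outside the closed disk), and with the explicit
coefficients `A_k`, `A_∞`, `A₀`, the function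
`P(ζ) = A₀ + Σ_{|ω_j|>1} 2A_j/(ζ−ω_j) + Σ_{|ω_j|<1} 2 conj(A_j) ζ/(1 − conj(ω_j)ζ)`
is analytic in a neighborhood of the closed unit disk, has `Re P = q/|g|²` on the unit circle,
and satisfies `Im P(0) = 0`. -/
theorem rational_poisson_integral_structure
    (b : ℂ) (hb : b ≠ 0) (q : ℝ)
    (m n : ℕ) (hmn : n ≤ m)
    (ω : Fin m → ℂ)
    (hω0 : ∀ k, ω k ≠ 0)
    (hωdist : ∀ k j, k ≠ j → ω k ≠ ω j)
    (hωrefl : ∀ k j, ω k * (starRingEnd ℂ) (ω j) ≠ 1)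
    (ζp : Fin n → ℂ)
    (hζp : ∀ j, 1 < ‖ζp j‖)
    (hζω : ∀ j k, ζp j ≠ ω k)
    (g : ℂ → ℂ)
    (hg : g = fun ζ => b * (∏ k, (ζ - ω k)) / ∏ j, (ζ - ζp j))
    (A : Fin m → ℂ)
    (hA : ∀ k, A k =
      ((q : ℂ) / ((‖b‖ : ℂ)) ^ 2) *
        ((∏ j, (ω k - ζp j)) *
          ∏ j, (starRingEnd ℂ) (1 / (starRingEnd ℂ) (ω k) - ζp j)) /
        ((∏ j ∈ Finset.univ.erase k, (ω k - ω j)) *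
          ∏ j, (starRingEnd ℂ) (1 / (starRingEnd ℂ) (ω k) - ω j)))
    (Ainf : ℂ)
    (hAinf : Ainf = if m = n then
        (q : ℂ) * (∏ j, (starRingEnd ℂ) (ζp j)) /
          (((‖b‖ : ℂ)) ^ 2 * ∏ j, (starRingEnd ℂ) (ω j))
      else 0)
    (A₀ : ℂ)
    (hA₀re : A₀.re = Ainf.re + (∑ k, A k / ω k).re)
    (hA₀im : A₀.im =
      (∑ j ∈ Finset.univ.filter (fun j => 1 < ‖ω j‖), 2 * A j / ω j).im)
    (P : ℂ → ℂ)
    (hP : P = fun ζ => A₀ +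
      (∑ j ∈ Finset.univ.filter (fun j => 1 < ‖ω j‖), 2 * A j / (ζ - ω j)) +
      ∑ j ∈ Finset.univ.filter (fun j => ‖ω j‖ < 1),
        2 * (starRingEnd ℂ) (A j) * ζ / (1 - (starRingEnd ℂ) (ω j) * ζ)) :
    (∃ V : Set ℂ, IsOpen V ∧ closedBall (0 : ℂ) 1 ⊆ V ∧ DifferentiableOn ℂ P V) ∧
    (∀ ζ : ℂ, ‖ζ‖ = 1 → (P ζ).re = q / ‖g ζ‖ ^ 2) ∧
    (P 0).im = 0 := by
  classical
  have hωc0 : ∀ k, (starRingEnd ℂ) (ω k) ≠ 0 := fun k => by simpa using hω0 k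
  have habs1 : ∀ k, ‖ω k‖ ≠ 1 := fun k h => hωrefl k k (by
    rw [Complex.mul_conj, Complex.normSq_eq_norm_sq, h]; norm_num)
  set β : ℂ := ((‖b‖ : ℂ)) ^ 2 with hβdef
  have hb' : ‖b‖ ≠ 0 := norm_ne_zero_iff.mpr hb
  have hβ : β ≠ 0 := pow_ne_zero 2 (Complex.ofReal_ne_zero.mpr hb')
  have hβc : (starRingEnd ℂ) β = β := by
    rw [hβdef, map_pow, Complex.conj_ofReal]
  have hqc : (starRingEnd ℂ) (q : ℂ) = (q : ℂ) := Complex.conj_ofReal q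
  have hrefl' : ∀ k j, (1 : ℂ) - (starRingEnd ℂ) (ω j) * ω k ≠ 0 := fun k j h =>
    hωrefl k j (by linear_combination -h)
  -- the cleared form of the coefficient identities
  have hAk : ∀ k, A k * ((∏ j ∈ Finset.univ.erase k, (ω k - ω j)) *
        ∏ j, (1 - (starRingEnd ℂ) (ω j) * ω k))
      = (q : ℂ) / β * (ω k ^ (m - n)) *
        ((∏ j, (ω k - ζp j)) * ∏ j, (1 - (starRingEnd ℂ) (ζp j) * ω k)) := by
    intro k
    have hw : ω k ≠ 0 := hω0 k
    have e2 : ∏ j, (starRingEnd ℂ) (1 / (starRingEnd ℂ) (ω k) - ζp j)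
        = (∏ j, (1 - (starRingEnd ℂ) (ζp j) * ω k)) * ((ω k)⁻¹) ^ n := by
      have he : ∀ j ∈ Finset.univ, (starRingEnd ℂ) (1 / (starRingEnd ℂ) (ω k) - ζp j)
          = (1 - (starRingEnd ℂ) (ζp j) * ω k) * (ω k)⁻¹ := fun j _ => by
        rw [map_sub, map_div₀, map_one, Complex.conj_conj]
        field_simp
      rw [Finset.prod_congr rfl he, Finset.prod_mul_distrib, Finset.prod_const,
        Finset.card_univ, Fintype.card_fin]
    have e3 : ∏ j, (starRingEnd ℂ) (1 / (starRingEnd ℂ) (ω k) - ω j)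
        = (∏ j, (1 - (starRingEnd ℂ) (ω j) * ω k)) * ((ω k)⁻¹) ^ m := by
      have he : ∀ j ∈ Finset.univ, (starRingEnd ℂ) (1 / (starRingEnd ℂ) (ω k) - ω j)
          = (1 - (starRingEnd ℂ) (ω j) * ω k) * (ω k)⁻¹ := fun j _ => by
        rw [map_sub, map_div₀, map_one, Complex.conj_conj]
        field_simp
      rw [Finset.prod_congr rfl he, Finset.prod_mul_distrib, Finset.prod_const,
        Finset.card_univ, Fintype.card_fin]
    have hD1 : (∏ j ∈ Finset.univ.erase k, (ω k - ω j)) ≠ 0 :=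
      Finset.prod_ne_zero_iff.mpr fun j hj =>
        sub_ne_zero.mpr (hωdist k j (Ne.symm (Finset.mem_erase.mp hj).1))
    have hPm : (∏ j, (1 - (starRingEnd ℂ) (ω j) * ω k)) ≠ 0 :=
      Finset.prod_ne_zero_iff.mpr fun j _ => hrefl' k j
    have hpw : ω k ^ (m - n) * ω k ^ n = ω k ^ m := by
      rw [← pow_add]; congr 1; omega
    rw [hA k, e2, e3]
    rw [div_mul_eq_mul_div,
      div_eq_iff (mul_ne_zero hD1 (mul_ne_zero hPm (pow_ne_zero _ (inv_ne_zero hw))))]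
    have hh : ω k ^ (m - n) * (ω k)⁻¹ ^ m = (ω k)⁻¹ ^ n := by
      rw [inv_pow, inv_pow, ← hpw, mul_inv, ← mul_assoc, mul_inv_cancel₀ (pow_ne_zero _ hw),
        one_mul]
    rw [← hh]
    ring

  have hAinf' : Ainf = if m = n then (q : ℂ) * (∏ j, (starRingEnd ℂ) (ζp j)) /
      (β * ∏ j, (starRingEnd ℂ) (ω j)) else 0 := hAinf
  have hkey := rpis_key (q : ℂ) β hβ hβc hqc m n hmn ω hω0 hωdist hωrefl ζp A hAk Ainf hAinf'
  refine ⟨?_, ?_, ?_⟩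
  · -- analyticity on a neighbourhood of the closed disk
    set T : Finset ℂ := (Finset.univ.filter (fun j => 1 < ‖ω j‖)).image ω ∪
        (Finset.univ.filter (fun j => ‖ω j‖ < 1)).image
          (fun j => ((starRingEnd ℂ) (ω j))⁻¹) with hT
    refine ⟨(↑T : Set ℂ)ᶜ, T.finite_toSet.isClosed.isOpen_compl, ?_, ?_⟩
    · intro z hz
      have hzb : ‖z‖ ≤ 1 := by
        simpa [Complex.dist_eq] using hz
      simp only [Set.mem_compl_iff, Finset.mem_coe, hT, Finset.mem_union, Finset.mem_image,
        Finset.mem_filter, Finset.mem_univ, true_and]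
      rintro (⟨j, hj, rfl⟩ | ⟨j, hj, rfl⟩)
      · exact absurd hzb (not_le.mpr hj)
      · have habsinv : ‖((starRingEnd ℂ) (ω j))⁻¹‖ = (‖ω j‖)⁻¹ := by
          rw [norm_inv, Complex.norm_conj]
        have hpos : 0 < ‖ω j‖ := norm_pos_iff.mpr (hω0 j)
        rw [habsinv] at hzb
        have h2 := mul_le_mul_of_nonneg_left hzb hpos.le
        rw [mul_inv_cancel₀ hpos.ne', mul_one] at h2
        linarith
    · rw [hP]
      apply DifferentiableOn.add
      apply DifferentiableOn.add
      · exact differentiableOn_const _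
      · refine DifferentiableOn.fun_sum fun j hj => ?_
        refine DifferentiableOn.div (differentiableOn_const _)
          (differentiableOn_id.sub (differentiableOn_const _)) ?_
        intro x hx
        refine sub_ne_zero.mpr fun hxe => hx ?_
        simp only [Finset.mem_coe, hT, Finset.mem_union, Finset.mem_image]
        exact Or.inl ⟨j, hj, hxe.symm⟩
      · refine DifferentiableOn.fun_sum fun j hj => ?_
        refine DifferentiableOn.div ((differentiableOn_const _).mul differentiableOn_id)
          ((differentiableOn_const _).sub ((differentiableOn_const _).mul differentiableOn_id))
          ?_
        intro x hx hzero
        have hxval : x = ((starRingEnd ℂ) (ω j))⁻¹ :=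
          eq_inv_of_mul_eq_one_right (by linear_combination -hzero)
        refine hx ?_
        simp only [Finset.mem_coe, hT, Finset.mem_union, Finset.mem_image]
        exact Or.inr ⟨j, hj, hxval.symm⟩
  · -- boundary values
    intro ζ hζ
    have hζ0 : ζ ≠ 0 := fun h => by rw [h] at hζ; simp at hζ
    have hzz : ζ * (starRingEnd ℂ) ζ = 1 := by
      rw [Complex.mul_conj, Complex.normSq_eq_norm_sq, hζ]; norm_num
    have hne1 : ∀ k, ζ ≠ ω k := fun k h => habs1 k (h ▸ hζ)
    have hne2 : ∀ k, (starRingEnd ℂ) (ω k) * ζ ≠ 1 := fun k h => habs1 k (by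
      have h2 := congrArg norm h
      rwa [norm_mul, Complex.norm_conj, hζ, mul_one, norm_one] at h2)
    have hζd : ∀ k, (1 : ℂ) - (starRingEnd ℂ) (ω k) * ζ ≠ 0 := fun k h => hne2 k (by
      linear_combination -h)
    have hζsub : ∀ k, ζ - ω k ≠ 0 := fun k => sub_ne_zero.mpr (hne1 k)
    have hζzp : ∀ j, ζ - ζp j ≠ 0 := fun j =>
      sub_ne_zero.mpr (fun h => (hζp j).ne' (h ▸ hζ))
    have E := hkey ζ hne1 hne2
    set Nz : ℂ := ∏ j, (ζ - ζp j) with hNz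
    set Dw : ℂ := ∏ k, (ζ - ω k) with hDw
    have hNzne : Nz ≠ 0 := Finset.prod_ne_zero_iff.mpr fun j _ => hζzp j
    have hDwne : Dw ≠ 0 := Finset.prod_ne_zero_iff.mpr fun k _ => hζsub k
    have hq1 : ∏ j, (1 - (starRingEnd ℂ) (ζp j) * ζ) = ζ ^ n * (starRingEnd ℂ) Nz := by
      have he : ∀ j ∈ Finset.univ, (1 - (starRingEnd ℂ) (ζp j) * ζ)
          = (starRingEnd ℂ) (ζ - ζp j) * ζ := fun j _ => by
        rw [map_sub]
        linear_combination -hzz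
      rw [Finset.prod_congr rfl he, Finset.prod_mul_distrib, Finset.prod_const,
        Finset.card_univ, Fintype.card_fin, hNz, map_prod, mul_comm]
    have hq2 : ∏ k, (1 - (starRingEnd ℂ) (ω k) * ζ) = ζ ^ m * (starRingEnd ℂ) Dw := by
      have he : ∀ k ∈ Finset.univ, (1 - (starRingEnd ℂ) (ω k) * ζ)
          = (starRingEnd ℂ) (ζ - ω k) * ζ := fun k _ => by
        rw [map_sub]
        linear_combination -hzz
      rw [Finset.prod_congr rfl he, Finset.prod_mul_distrib, Finset.prod_const,
        Finset.card_univ, Fintype.card_fin, hDw, map_prod, mul_comm]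
    rw [hq1, hq2] at E
    have hzpow : ζ ^ (m - n) * ζ ^ n = ζ ^ m := by
      rw [← pow_add]; congr 1; omega
    have hmulNz : Nz * (starRingEnd ℂ) Nz = ((‖Nz‖ : ℝ) : ℂ) ^ 2 := by
      rw [Complex.mul_conj, Complex.normSq_eq_norm_sq]; push_cast; ring
    have hmulDw : Dw * (starRingEnd ℂ) Dw = ((‖Dw‖ : ℝ) : ℂ) ^ 2 := by
      rw [Complex.mul_conj, Complex.normSq_eq_norm_sq]; push_cast; ring
    set r : ℝ := q * ‖Nz‖ ^ 2 / (‖b‖ ^ 2 * ‖Dw‖ ^ 2) with hr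
    have hRHS : (q : ℂ) / β * ζ ^ (m - n) * (Nz * (ζ ^ n * (starRingEnd ℂ) Nz)) /
        (Dw * (ζ ^ m * (starRingEnd ℂ) Dw)) = ((r : ℝ) : ℂ) := by
      have haNzC : ((‖Nz‖ : ℝ) : ℂ) ≠ 0 := by
        simpa using hNzne
      have haDwC : ((‖Dw‖ : ℝ) : ℂ) ≠ 0 := by
        simpa using hDwne
      rw [show Nz * (ζ ^ n * (starRingEnd ℂ) Nz) = Nz * (starRingEnd ℂ) Nz * ζ ^ n from by ring,
        show Dw * (ζ ^ m * (starRingEnd ℂ) Dw) = Dw * (starRingEnd ℂ) Dw * ζ ^ m from by ring,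
        hmulNz, hmulDw, hr, hβdef]
      push_cast
      have hb'C : ((‖b‖ : ℝ) : ℂ) ≠ 0 := Complex.ofReal_ne_zero.mpr hb'
      field_simp
      linear_combination (q : ℂ) * hzpow
    rw [hRHS] at E
    -- take real parts
    have hpair : ∀ k, (starRingEnd ℂ) (A k) * ζ / (1 - (starRingEnd ℂ) (ω k) * ζ)
        = (starRingEnd ℂ) (A k / (ζ - ω k)) := by
      intro k
      have hcsub : (starRingEnd ℂ) ζ - (starRingEnd ℂ) (ω k) ≠ 0 := fun h => hζsub k (by
        have h2 := congrArg (starRingEnd ℂ) (sub_eq_zero.mp h)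
        simp only [Complex.conj_conj] at h2
        rw [sub_eq_zero]
        exact h2)
      rw [map_div₀, map_sub, div_eq_div_iff (hζd k) hcsub]
      linear_combination (starRingEnd ℂ) (A k) * hzz
    have Ere := congrArg Complex.re E
    rw [Complex.add_re, Complex.ofReal_re] at Ere
    have hterm_re : ∀ k, (A k / (ζ - ω k) + (starRingEnd ℂ) (A k) * ζ /
        (1 - (starRingEnd ℂ) (ω k) * ζ)).re = 2 * (A k / (ζ - ω k)).re := fun k => by
      rw [hpair k, Complex.add_re, Complex.conj_re]; ring
    simp only [Complex.re_sum, hterm_re, Complex.ofReal_re] at Ere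
    -- compute (P ζ).re
    have h2re : ∀ z : ℂ, ((2 : ℂ) * z).re = 2 * z.re := fun z => by
      simp [Complex.mul_re]
    have hsplit1 : ∀ j, (2 * A j / (ζ - ω j)).re = 2 * (A j / (ζ - ω j)).re := fun j => by
      rw [mul_div_assoc, h2re]
    have hsplit2 : ∀ j, (2 * (starRingEnd ℂ) (A j) * ζ / (1 - (starRingEnd ℂ) (ω j) * ζ)).re
        = 2 * (A j / (ζ - ω j)).re := fun j => by
      rw [mul_assoc, mul_div_assoc, h2re, hpair j, Complex.conj_re]
    have hfilter : Finset.univ.filter (fun j => ‖ω j‖ < 1)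
        = Finset.univ.filter (fun j => ¬ 1 < ‖ω j‖) := by
      refine Finset.filter_congr fun j _ => ?_
      simp only [eq_iff_iff, not_lt]
      exact ⟨fun h => h.le, fun h => lt_of_le_of_ne h (habs1 j)⟩
    have hPre : (P ζ).re = A₀.re + ∑ k, 2 * (A k / (ζ - ω k)).re := by
      rw [hP]
      simp only [Complex.add_re, Complex.re_sum]
      rw [Finset.sum_congr rfl (fun j _ => hsplit1 j),
        Finset.sum_congr rfl (fun j _ => hsplit2 j), hfilter, add_assoc,
        Finset.sum_filter_add_sum_filter_not]
    rw [hPre, hA₀re, Complex.re_sum, Ere]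
    -- finally r = q / |g ζ|^2
    have hgval : ‖g ζ‖ = ‖b‖ * ‖Dw‖ / ‖Nz‖ := by
      rw [hg]
      simp only [norm_div, norm_mul, hDw, hNz]
    rw [hr, hgval]
    have haNz : ‖Nz‖ ≠ 0 := by simpa using hNzne
    have haDw : ‖Dw‖ ≠ 0 := by simpa using hDwne
    field_simp
    try ring
    try exact Or.inl trivial
  · -- imaginary part at the origin
    rw [hP]
    simp only [mul_zero, zero_div, Finset.sum_const_zero, add_zero]
    have h7 : (∑ j ∈ Finset.univ.filter (fun j => 1 < ‖ω j‖),
        2 * A j / ((0 : ℂ) - ω j))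
        = -∑ j ∈ Finset.univ.filter (fun j => 1 < ‖ω j‖), 2 * A j / ω j := by
      rw [← Finset.sum_neg_distrib]
      exact Finset.sum_congr rfl fun j _ => by rw [zero_sub, div_neg]
    rw [h7, Complex.add_im, Complex.neg_im, hA₀im]
    ring

end
end
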